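/- arXiv:0907.0141 — 5 statements merged into one kernel-verified Lean document; each statement's English description precedes it below -/
import Mathlib

section
/- For every prime p, the set of rational numbers {a/n : n ∈ ℕ, a ∈ ℤ, |a| ≤ n, gcd(a,n) = 1} ∩ ℤ_p is dense in the ring ℤ_p of p-adic integers. -/
open MeasureTheory Filter

noncomputable section

/-- **Density of height-balanced reduced fractions in `ℤ_p` (Haynes).** For every
prime `p`, the set of points of `ℤ_p` that are of the form `a/n` with `n ∈ ℕ`,
`a ∈ ℤ`, `|a| ≤ n` and `gcd(a,n) = 1` is dense in `ℤ_p`. -/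
theorem stmt12 (p : ℕ) [Fact p.Prime] :
    Dense {x : ℤ_[p] | ∃ (a : ℤ) (n : ℕ), 0 < n ∧ |a| ≤ (n : ℤ) ∧ Int.gcd a n = 1 ∧
      (x : ℚ_[p]) = (a : ℚ_[p]) / (n : ℚ_[p])} := by
  have hp := Fact.out (p := p.Prime)
  have hp1 : (1:ℝ) < p := by exact_mod_cast hp.one_lt
  rw [Metric.dense_iff]
  intro x r hr
  obtain ⟨m, hm⟩ := (PadicInt.denseRange_natCast (p := p)).exists_dist_lt x (by linarith : (0:ℝ) < r/2)
  obtain ⟨k, hk⟩ := exists_pow_lt_of_lt_one (by linarith : (0:ℝ) < r/2)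
    (show (p:ℝ)⁻¹ < 1 by rw [inv_lt_one_iff₀]; right; exact hp1)
  set K := k + 1 with hK
  set n : ℕ := 1 + p ^ K * m with hn
  have hppos : (0:ℝ) < p := by linarith
  have hpkK : ((p:ℝ)⁻¹) ^ K ≤ ((p:ℝ)⁻¹) ^ k := by
    apply pow_le_pow_of_le_one (by positivity)
      (by rw [inv_le_one_iff₀]; right; exact le_of_lt hp1) (by omega)
  have hnormpK : ‖((p:ℤ_[p])) ^ K‖ ≤ ((p:ℝ)⁻¹) ^ K := by
    simp [PadicInt.norm_p]
  -- n is a unit in ℤ_[p]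
  have hnd : ¬ (p ∣ n) := by
    intro h
    have h2 : p ∣ p ^ K * m := Dvd.dvd.mul_right (dvd_pow_self _ (by omega)) _
    have h3 : p ∣ n - p ^ K * m := Nat.dvd_sub h h2
    rw [hn, Nat.add_sub_cancel] at h3
    exact absurd (Nat.dvd_one.mp h3) hp.one_lt.ne'
  have hnu : IsUnit ((n:ℕ) : ℤ_[p]) := by
    rw [PadicInt.isUnit_iff]
    rcases lt_or_eq_of_le (PadicInt.norm_le_one ((n:ℕ) : ℤ_[p])) with h | h
    · exfalso
      apply hnd
      have : ‖(((n:ℤ)) : ℤ_[p])‖ < 1 := by simpa using h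
      exact_mod_cast (PadicInt.norm_int_lt_one_iff_dvd _).mp this
    · exact h
  obtain ⟨y, hyn⟩ : ∃ y : ℤ_[p], y * (n : ℤ_[p]) = (m : ℤ_[p]) := by
    refine ⟨(m : ℤ_[p]) * ↑hnu.unit⁻¹, ?_⟩
    rw [mul_assoc]
    rw [hnu.val_inv_mul, mul_one]
  have hncast : ((n:ℕ) : ℤ_[p]) = 1 + (p:ℤ_[p]) ^ K * (m : ℤ_[p]) := by
    rw [hn]; push_cast; ring
  refine ⟨y, Metric.mem_ball.mpr ?_, ⟨(m:ℤ), n, by omega, ?_, ?_, ?_⟩⟩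
  · -- dist y x < r
    have hdiff : (m : ℤ_[p]) - y = y * ((p:ℤ_[p]) ^ K * (m : ℤ_[p])) := by
      linear_combination (-1 : ℤ_[p]) * hyn + y * hncast
    have h1 : ‖(m : ℤ_[p]) - y‖ ≤ ((p:ℝ)⁻¹) ^ K := by
      rw [hdiff]
      calc ‖y * ((p:ℤ_[p]) ^ K * (m : ℤ_[p]))‖
          ≤ ‖y‖ * (‖(p:ℤ_[p]) ^ K‖ * ‖(m : ℤ_[p])‖) :=
            (norm_mul_le _ _).trans
              (mul_le_mul_of_nonneg_left (norm_mul_le _ _) (norm_nonneg y))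
        _ ≤ 1 * (((p:ℝ)⁻¹) ^ K * 1) := by
            apply mul_le_mul (PadicInt.norm_le_one y) ?_ (by positivity) zero_le_one
            exact mul_le_mul hnormpK (PadicInt.norm_le_one _) (norm_nonneg _) (by positivity)
        _ = ((p:ℝ)⁻¹) ^ K := by ring
    have h2 : dist (m : ℤ_[p]) y < r / 2 := by
      rw [dist_eq_norm]
      calc ‖(m : ℤ_[p]) - y‖ ≤ ((p:ℝ)⁻¹) ^ K := h1
        _ ≤ ((p:ℝ)⁻¹) ^ k := hpkK
        _ < r/2 := hk
    calc dist y x ≤ dist y (m : ℤ_[p]) + dist (m : ℤ_[p]) x := dist_triangle _ _ _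
      _ = dist (m : ℤ_[p]) y + dist x (m : ℤ_[p]) := by rw [dist_comm y, dist_comm x]
      _ < r/2 + r/2 := add_lt_add h2 hm
      _ = r := by ring
  · -- |m| ≤ n
    have hm_le : m ≤ n := by
      have h1 : 1 ≤ p ^ K := Nat.one_le_pow _ _ hp.pos
      calc m = 1 * m := (one_mul m).symm
        _ ≤ p ^ K * m := Nat.mul_le_mul_right m h1
        _ ≤ n := by omega
    simpa using (by exact_mod_cast hm_le : (m:ℤ) ≤ (n:ℤ))
  · -- gcd
    have hc : Nat.Coprime m n := by
      rw [hn]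
      exact (Nat.coprime_add_mul_right_right m 1 (p^K)).mpr (Nat.coprime_one_right m)
    simpa [Int.gcd] using hc
  · -- equation
    have hn0 : ((n:ℚ_[p])) ≠ 0 := by
      exact_mod_cast Nat.cast_ne_zero.mpr (by omega : n ≠ 0)
    rw [eq_div_iff hn0]
    have := congrArg (fun z : ℤ_[p] => (z : ℚ_[p])) hyn
    push_cast at this ⊢
    exact this
end
end

section
/- Let p be a prime and let ψ : ℕ → ℝ be a non-negative function taking values in the set {0} ∪ {p^{−j} : j ≥ 0 an integer} and satisfying ψ(n) < 1/(4n) for all n ∈ ℕ. Then for all m, n ∈ ℕ with p ∤ m and p ∤ n one has λ(A_m(ψ/2) ∩ A_n(ψ/2)) ≤ μ_p(E_m(ψ) ∩ E_n(ψ)) ≤ (3/2)·λ(A_m(2ψ) ∩ A_n(2ψ)). -/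
open MeasureTheory Filter

noncomputable section

/-- The set `E_n(ψ) ⊆ ℤ_p`: union over integers `a` with `|a| ≤ n`, `gcd(a,n) = 1`
of the closed balls `{x : |x - a/n|_p ≤ ψ(n)}`. -/
def padicE (p : ℕ) [Fact p.Prime] (ψ : ℕ → ℝ) (n : ℕ) : Set ℤ_[p] :=
  {x | ∃ a : ℤ, |a| ≤ (n : ℤ) ∧ Int.gcd a n = 1 ∧
    ‖(x : ℚ_[p]) - (a : ℚ_[p]) / (n : ℚ_[p])‖ ≤ ψ n}

/-- The set `A_n(ψ) ⊆ ℝ/ℤ`: union over `1 ≤ a ≤ n`, `gcd(a,n) = 1` of the closed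
intervals `[a/n - ψ(n), a/n + ψ(n)]` taken mod 1. -/
def circleA (ψ : ℕ → ℝ) (n : ℕ) : Set UnitAddCircle :=
  {x | ∃ a : ℕ, 1 ≤ a ∧ a ≤ n ∧ Nat.gcd a n = 1 ∧
    ‖x - (((a : ℝ) / (n : ℝ) : ℝ) : UnitAddCircle)‖ ≤ ψ n}

/-! ### Auxiliary lemmas: the circle -/

lemma unit_norm_eq (x : ℝ) : ‖((x:ℝ) : UnitAddCircle)‖ = |x - round x| := by
  rw [AddCircle.norm_eq]
  norm_num

lemma round_min (x : ℝ) (z : ℤ) : |x - round x| ≤ |x - z| := by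
  rcases eq_or_ne z (round x) with rfl | hz
  · rfl
  · have h1 : |x - round x| ≤ 1/2 := abs_sub_round x
    have h2 : (1:ℝ) ≤ |(round x : ℝ) - z| := by
      have hne : ((round x):ℤ) ≠ z := fun h => hz h.symm
      have h0 : (1:ℤ) ≤ |(round x : ℤ) - z| := by
        rcases abs_pos.mpr (sub_ne_zero.mpr hne) with h
        omega
      calc (1:ℝ) ≤ ((|round x - z| : ℤ) : ℝ) := by exact_mod_cast h0
        _ = |(round x : ℝ) - z| := by rw [Int.cast_abs]; push_cast; ring_nf
    have h3 : |(round x:ℝ) - z| ≤ |x - round x| + |x - z| := by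
      calc |(round x:ℝ) - z| = |((round x:ℝ) - x) - ((z:ℝ) - x)| := by ring_nf
        _ ≤ |(round x:ℝ) - x| + |(z:ℝ) - x| := abs_sub _ _
        _ = |x - round x| + |x - z| := by rw [abs_sub_comm, abs_sub_comm ((z:ℝ)) x]
    linarith

lemma unit_norm_le_abs (x : ℝ) : ‖((x:ℝ) : UnitAddCircle)‖ ≤ |x| := by
  rw [unit_norm_eq]
  simpa using round_min x 0

lemma unit_norm_int_shift (x : ℝ) (z : ℤ) :
    (((x + z : ℝ)) : UnitAddCircle) = ((x:ℝ) : UnitAddCircle) := by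
  have h : ((x + z : ℝ) : UnitAddCircle) - ((x:ℝ) : UnitAddCircle) = (((z:ℝ)) : UnitAddCircle) := by
    rw [← AddCircle.coe_sub]
    norm_num
  have hz : (((z:ℝ)) : UnitAddCircle) = 0 := by
    rw [AddCircle.coe_eq_zero_iff]
    exact ⟨z, by simp⟩
  have := h.trans hz
  linear_combination (norm := abel) this

lemma int_gcd_add_mul (b c : ℤ) (n : ℤ) : Int.gcd (b + n*c) n = Int.gcd b n := by
  apply Nat.dvd_antisymm
  · rw [← Int.natCast_dvd_natCast]
    apply Int.dvd_coe_gcd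
    · have h1 : (↑(Int.gcd (b + n*c) n) : ℤ) ∣ (b + n*c) := Int.gcd_dvd_left _ _
      have h2 : (↑(Int.gcd (b + n*c) n) : ℤ) ∣ n := Int.gcd_dvd_right _ _
      have := dvd_sub h1 (h2.mul_right c)
      simpa using this
    · exact Int.gcd_dvd_right _ _
  · rw [← Int.natCast_dvd_natCast]
    apply Int.dvd_coe_gcd
    · exact dvd_add (Int.gcd_dvd_left _ _) ((Int.gcd_dvd_right _ _).mul_right c)
    · exact Int.gcd_dvd_right _ _

lemma circle_norm_of_int_le (a b : ℤ) {m n : ℕ} (hm : 0 < m) (hn : 0 < n) {r : ℝ}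
    (h : |((a*n - b*m : ℤ) : ℝ)| ≤ m*n*r) :
    ‖(((a:ℝ)/m - (b:ℝ)/n : ℝ) : UnitAddCircle)‖ ≤ r := by
  have hm' : (0:ℝ) < m := by exact_mod_cast hm
  have hn' : (0:ℝ) < n := by exact_mod_cast hn
  have ht : (a:ℝ)/m - (b:ℝ)/n = ((a*n - b*m : ℤ) : ℝ) / (m*n) := by
    push_cast; field_simp
  rw [ht]
  refine le_trans (unit_norm_le_abs _) ?_
  rw [abs_div, abs_of_pos (by positivity : (0:ℝ) < (m:ℝ)*(n:ℝ))]
  rw [div_le_iff₀ (by positivity : (0:ℝ) < (m:ℝ)*(n:ℝ))]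
  linarith [h]

lemma circle_norm_to_int (a b : ℤ) {m n : ℕ} (hm : 0 < m) (hn : 0 < n) {r : ℝ}
    (h : ‖(((a:ℝ)/m - (b:ℝ)/n : ℝ) : UnitAddCircle)‖ ≤ r) :
    ∃ b' : ℤ, Int.gcd b' n = Int.gcd b n ∧ |((a*n - b'*m : ℤ) : ℝ)| ≤ m*n*r := by
  have hm' : (0:ℝ) < m := by exact_mod_cast hm
  have hn' : (0:ℝ) < n := by exact_mod_cast hn
  set t : ℝ := (a:ℝ)/m - (b:ℝ)/n with htdef
  refine ⟨b + n * round t, int_gcd_add_mul b (round t) n, ?_⟩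
  rw [unit_norm_eq] at h
  have key : ((a*n - (b + n * round t)*m : ℤ) : ℝ) = (t - round t) * (m*n) := by
    push_cast
    simp only [htdef]; field_simp
    ring
  rw [key, abs_mul, abs_of_pos (by positivity : (0:ℝ) < (m:ℝ)*n)]
  calc |t - round t| * (m*n) ≤ r * (m*n) := by
        apply mul_le_mul_of_nonneg_right h (by positivity)
    _ = m*n*r := by ring

lemma circle_norm_frac_lb (q : ℤ) {m : ℕ} (hm : 0 < m) (hq : ¬ ((m:ℤ) ∣ q)) :
    1/(m:ℝ) ≤ ‖(((q:ℝ)/m : ℝ) : UnitAddCircle)‖ := by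
  have hm' : (0:ℝ) < m := by exact_mod_cast hm
  rw [unit_norm_eq]
  set c := round ((q:ℝ)/m)
  have hne : q - m * c ≠ 0 := by
    intro h
    exact hq ⟨c, by omega⟩
  have h1 : (1:ℝ) ≤ |((q - m*c : ℤ) : ℝ)| := by
    have h2 : (1:ℤ) ≤ |q - m*c| := by
      have := abs_pos.mpr hne
      omega
    calc (1:ℝ) ≤ ((|q - m*c| : ℤ) : ℝ) := by exact_mod_cast h2
      _ = |((q - m*c : ℤ) : ℝ)| := by rw [Int.cast_abs]
  have key : (q:ℝ)/m - c = ((q - m*c : ℤ) : ℝ)/m := by push_cast; field_simp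
  rw [key, abs_div, abs_of_pos hm', div_le_div_iff_of_pos_right hm']
  exact h1

/-! ### Auxiliary lemmas: `ℤ_[p]` -/

variable {p : ℕ} [Fact p.Prime]

lemma norm_natCast_eq_one {m : ℕ} (hm : ¬ p ∣ m) : ‖((m:ℕ) : ℚ_[p])‖ = 1 := by
  have h1 : ‖((m:ℤ) : ℚ_[p])‖ ≤ 1 := Padic.norm_int_le_one _
  have h2 : ¬ ‖((m:ℤ) : ℚ_[p])‖ < 1 := by
    rw [Padic.norm_intCast_lt_one_iff]
    exact_mod_cast hm
  push_cast at h1 h2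
  linarith [lt_or_eq_of_le h1]

lemma div_norm_le_one (a : ℤ) {m : ℕ} (hm : ¬ p ∣ m) :
    ‖(a:ℚ_[p])/(m:ℚ_[p])‖ ≤ 1 := by
  rw [norm_div, norm_natCast_eq_one hm, div_one]
  exact Padic.norm_int_le_one _

lemma padic_natCast_ne_zero {m : ℕ} (hm : ¬ p ∣ m) : (m:ℚ_[p]) ≠ 0 := by
  intro h
  rw [show ((m:ℚ_[p])) = ((m:ℕ):ℚ_[p]) from rfl, Nat.cast_eq_zero] at h
  exact hm (h ▸ dvd_zero p)

lemma dist_centers (a b : ℤ) {m n : ℕ} (hm : ¬ p ∣ m) (hn : ¬ p ∣ n) :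
    ‖(a:ℚ_[p])/(m:ℚ_[p]) - (b:ℚ_[p])/(n:ℚ_[p])‖ = ‖((a*n - b*m : ℤ) : ℚ_[p])‖ := by
  have hmq := padic_natCast_ne_zero hm
  have hnq := padic_natCast_ne_zero hn
  have h : (a:ℚ_[p])/(m:ℚ_[p]) - (b:ℚ_[p])/(n:ℚ_[p]) =
      ((a*n - b*m : ℤ) : ℚ_[p]) / ((m:ℚ_[p]) * (n:ℚ_[p])) := by
    field_simp; push_cast
    ring
  rw [h, norm_div, norm_mul, norm_natCast_eq_one hm, norm_natCast_eq_one hn]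
  simp

/-- The point `a/m` as an element of `ℤ_[p]`. -/
def padicCtr (a : ℤ) {m : ℕ} (hm : ¬ p ∣ m) : ℤ_[p] :=
  ⟨(a:ℚ_[p])/(m:ℚ_[p]), div_norm_le_one a hm⟩

lemma mem_ball_iff' {m : ℕ} (hm : ¬ p ∣ m) (a : ℤ) (r : ℝ) (x : ℤ_[p]) :
    ‖(x : ℚ_[p]) - (a : ℚ_[p]) / (m : ℚ_[p])‖ ≤ r ↔
      x ∈ Metric.closedBall (padicCtr a hm) r := by
  rw [Metric.mem_closedBall, dist_eq_norm, PadicInt.norm_def]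
  rfl

variable [MeasurableSpace ℤ_[p]] [BorelSpace ℤ_[p]]
variable (μ : Measure ℤ_[p]) [μ.IsAddHaarMeasure] [IsProbabilityMeasure μ]

lemma padic_ball_measure (j : ℕ) (z : ℤ_[p]) :
    μ (Metric.closedBall z ((p:ℝ)^(-(j:ℤ)))) = ((p:ENNReal)^j)⁻¹ := by
  have hp : (1:ℕ) < p := (Fact.out : p.Prime).one_lt
  rw [Measure.addHaar_closedBall_center]
  have hcover : (Set.univ : Set ℤ_[p]) =
      ⋃ r ∈ Finset.range (p^j), Metric.closedBall ((r:ℕ) : ℤ_[p]) ((p:ℝ)^(-(j:ℤ))) := by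
    ext x
    simp only [Set.mem_univ, Set.mem_iUnion, true_iff, Finset.mem_range, Metric.mem_closedBall]
    refine ⟨x.appr j, x.appr_lt j, ?_⟩
    rw [dist_eq_norm]
    exact (PadicInt.norm_le_pow_iff_mem_span_pow _ j).mpr (PadicInt.appr_spec j x)
  have hdisj : (↑(Finset.range (p^j)) : Set ℕ).PairwiseDisjoint
      (fun r : ℕ => Metric.closedBall ((r:ℕ) : ℤ_[p]) ((p:ℝ)^(-(j:ℤ)))) := by
    intro r hr s hs hrs
    simp only [Finset.coe_range, Set.mem_Iio] at hr hs
    apply Set.disjoint_left.mpr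
    intro x hxr hxs
    rw [Metric.mem_closedBall, dist_eq_norm] at hxr hxs
    have hsub : ‖((r:ℤ_[p]) - s)‖ ≤ (p:ℝ)^(-(j:ℤ)) := by
      have h : (r:ℤ_[p]) - s = -(x - r) + (x - s) := by ring
      rw [h]
      exact le_trans (PadicInt.nonarchimedean _ _) (by rw [norm_neg]; exact max_le hxr hxs)
    have hdvd : ((p:ℤ)^j) ∣ ((r:ℤ) - (s:ℤ)) := by
      rw [← PadicInt.norm_int_le_pow_iff_dvd]
      push_cast
      push_cast at hsub
      exact hsub
    have hne : (r:ℤ) - (s:ℤ) ≠ 0 := by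
      intro h
      exact hrs (by omega)
    have hle := Int.le_of_dvd (abs_pos.mpr hne) ((dvd_abs _ _).mpr hdvd)
    have h1 : (r:ℤ) < (p:ℤ)^j := by exact_mod_cast hr
    have h2 : (s:ℤ) < (p:ℤ)^j := by exact_mod_cast hs
    have h3 : |(r:ℤ) - (s:ℤ)| < (p:ℤ)^j := abs_sub_lt_iff.mpr ⟨by omega, by omega⟩
    omega
  have hsum : ∑ r ∈ Finset.range (p^j),
      μ (Metric.closedBall ((r:ℕ) : ℤ_[p]) ((p:ℝ)^(-(j:ℤ)))) = 1 := by
    rw [← measure_biUnion_finset hdisj (fun r _ => measurableSet_closedBall), ← hcover,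
      measure_univ]
  have hconst : ∀ r ∈ Finset.range (p^j),
      μ (Metric.closedBall ((r:ℕ) : ℤ_[p]) ((p:ℝ)^(-(j:ℤ)))) =
      μ (Metric.closedBall (0 : ℤ_[p]) ((p:ℝ)^(-(j:ℤ)))) := fun r _ =>
    Measure.addHaar_closedBall_center μ _ _
  rw [Finset.sum_congr rfl hconst, Finset.sum_const, Finset.card_range, nsmul_eq_mul] at hsum
  have hpj : ((p:ENNReal)^j) ≠ 0 := by
    simp [(by positivity : (0:ℕ) < p).ne']
  have hpj' : ((p:ENNReal)^j) ≠ ⊤ := by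
    simp [ENNReal.natCast_ne_top]
  calc μ (Metric.closedBall (0 : ℤ_[p]) ((p:ℝ)^(-(j:ℤ))))
      = ((p:ENNReal)^j)⁻¹ * ((p^j : ℕ) * μ (Metric.closedBall (0 : ℤ_[p]) ((p:ℝ)^(-(j:ℤ))))) := by
        push_cast
        rw [← mul_assoc, ENNReal.inv_mul_cancel hpj hpj', one_mul]
    _ = ((p:ENNReal)^j)⁻¹ := by rw [hsum, mul_one]

lemma padic_singleton (z : ℤ_[p]) : μ {z} = 0 := by
  have hp : (1:ℕ) < p := (Fact.out : p.Prime).one_lt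
  have key : ∀ j : ℕ, μ {z} ≤ ((j:ENNReal))⁻¹ := by
    intro j
    have h1 : μ {z} ≤ ((p:ENNReal)^j)⁻¹ := by
      rw [← padic_ball_measure μ j z]
      apply measure_mono
      intro x hx
      simp only [Set.mem_singleton_iff] at hx
      subst hx
      exact Metric.mem_closedBall_self (by positivity)
    refine h1.trans (ENNReal.inv_le_inv.mpr ?_)
    calc ((j:ENNReal)) ≤ ((2:ENNReal))^j := by
          exact_mod_cast le_trans (by exact_mod_cast Nat.le_of_lt (Nat.lt_two_pow_self (n := j))) le_rfl
      _ ≤ (p:ENNReal)^j := by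
          gcongr
          exact_mod_cast hp
  have h0 : Tendsto (fun j : ℕ => ((j:ENNReal))⁻¹) atTop (nhds 0) :=
    ENNReal.tendsto_inv_nat_nhds_zero
  have hle := ge_of_tendsto' h0 (fun j => key j)
  exact le_antisymm hle (zero_le)

/-! ### The counting sets -/

open scoped Classical in
/-- Numerators `a ∈ [1,m]` coprime to `m` admitting `b` coprime to `n`
with `|a n - b m| ≤ C`. -/
def Sset (m n : ℕ) (C : ℝ) : Finset ℤ :=
  (Finset.Icc 1 (m:ℤ)).filter (fun a => Int.gcd a m = 1 ∧
    ∃ b : ℤ, Int.gcd b n = 1 ∧ |((a*(n:ℤ) - b*(m:ℤ) : ℤ) : ℝ)| ≤ C)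

open scoped Classical in
/-- Numerators `a ∈ [-m,m]` coprime to `m` admitting `b` with `p^k ∣ a n - b m`. -/
def Pset (p : ℕ) (m n k : ℕ) : Finset ℤ :=
  (Finset.Icc (-(m:ℤ)) (m:ℤ)).filter (fun a => Int.gcd a m = 1 ∧
    ∃ b : ℤ, |b| ≤ (n:ℤ) ∧ Int.gcd b n = 1 ∧ (p:ℤ)^k ∣ (a*(n:ℤ) - b*(m:ℤ)))

open scoped Classical in
lemma mem_Sset {m n : ℕ} {C : ℝ} {a : ℤ} : a ∈ Sset m n C ↔
    (1 ≤ a ∧ a ≤ (m:ℤ)) ∧ Int.gcd a m = 1 ∧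
      ∃ b : ℤ, Int.gcd b n = 1 ∧ |((a*(n:ℤ) - b*(m:ℤ) : ℤ) : ℝ)| ≤ C := by
  rw [Sset, Finset.mem_filter, Finset.mem_Icc]

open scoped Classical in
lemma mem_Pset {p m n k : ℕ} {a : ℤ} : a ∈ Pset p m n k ↔
    (-(m:ℤ) ≤ a ∧ a ≤ (m:ℤ)) ∧ Int.gcd a m = 1 ∧
      ∃ b : ℤ, |b| ≤ (n:ℤ) ∧ Int.gcd b n = 1 ∧ (p:ℤ)^k ∣ (a*(n:ℤ) - b*(m:ℤ)) := by
  rw [Pset, Finset.mem_filter, Finset.mem_Icc]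

lemma ofReal_inv_pow (p j : ℕ) (hp : 0 < p) :
    ENNReal.ofReal (((p:ℝ)^j)⁻¹) = ((p:ENNReal)^j)⁻¹ := by
  have hp' : (0:ℝ) < p := by exact_mod_cast hp
  rw [ENNReal.ofReal_inv_of_pos (by positivity), ENNReal.ofReal_pow (by positivity),
    ENNReal.ofReal_natCast]

section Main

variable (ψ : ℕ → ℝ) (m n j k : ℕ)

lemma step1 (hm0 : 0 < m) (hn0 : 0 < n) (hψm : 0 ≤ ψ m)
    (hmn : ψ m ≤ ψ n) :
    volume (circleA (fun i => ψ i / 2) m ∩ circleA (fun i => ψ i / 2) n) ≤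
      ((Sset m n (m*n*ψ n)).card : ENNReal) * ENNReal.ofReal (ψ m) := by
  have hm' : (0:ℝ) < m := by exact_mod_cast hm0
  have hn' : (0:ℝ) < n := by exact_mod_cast hn0
  have hsub : circleA (fun i => ψ i / 2) m ∩ circleA (fun i => ψ i / 2) n ⊆
      ⋃ a ∈ Sset m n (m*n*ψ n),
        Metric.closedBall ((((a:ℝ)/m : ℝ) : UnitAddCircle)) (ψ m / 2) := by
    rintro x ⟨⟨a, ha1, ham, hagcd, hax⟩, ⟨b, hb1, hbn, hbgcd, hbx⟩⟩
    simp only at hax hbx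
    have hcdist : ‖((((a:ℤ):ℝ)/m - ((b:ℤ):ℝ)/n : ℝ) : UnitAddCircle)‖ ≤ ψ n := by
      have heq : ((((a:ℤ):ℝ)/m - ((b:ℤ):ℝ)/n : ℝ) : UnitAddCircle) =
          (((a:ℝ)/m : ℝ) : UnitAddCircle) - (((b:ℝ)/n : ℝ) : UnitAddCircle) := by
        push_cast
        rw [AddCircle.coe_sub]
      rw [heq]
      calc ‖(((a:ℝ)/m : ℝ) : UnitAddCircle) - (((b:ℝ)/n : ℝ) : UnitAddCircle)‖
          = ‖(x - (((b:ℝ)/n : ℝ) : UnitAddCircle)) - (x - (((a:ℝ)/m : ℝ) : UnitAddCircle))‖ := by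
            congr 1
            abel
        _ ≤ ‖x - (((b:ℝ)/n : ℝ) : UnitAddCircle)‖ + ‖x - (((a:ℝ)/m : ℝ) : UnitAddCircle)‖ :=
            norm_sub_le _ _
        _ ≤ ψ n / 2 + ψ m / 2 := add_le_add hbx hax
        _ ≤ ψ n := by linarith
    obtain ⟨b', hb'gcd, hb'⟩ := circle_norm_to_int (a:ℤ) (b:ℤ) hm0 hn0 hcdist
    have haS : (a:ℤ) ∈ Sset m n (m*n*ψ n) := by
      rw [mem_Sset]
      refine ⟨⟨by exact_mod_cast ha1, by exact_mod_cast ham⟩, ?_, b', ?_, ?_⟩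
      · rw [Int.gcd_natCast_natCast]; exact hagcd
      · rw [hb'gcd, Int.gcd_natCast_natCast]; exact hbgcd
      · exact_mod_cast hb'
    refine Set.mem_biUnion haS ?_
    rw [Metric.mem_closedBall, dist_eq_norm]
    push_cast
    exact hax
  refine le_trans (measure_mono hsub) (le_trans (measure_biUnion_finset_le _ _) ?_)
  have hball : ∀ a ∈ Sset m n (m*n*ψ n),
      volume (Metric.closedBall ((((a:ℝ)/m : ℝ) : UnitAddCircle)) (ψ m / 2)) ≤
        ENNReal.ofReal (ψ m) := by
    intro a _
    rw [AddCircle.volume_closedBall]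
    apply ENNReal.ofReal_le_ofReal
    refine le_trans (min_le_right _ _) (by linarith)
  calc ∑ a ∈ Sset m n (m*n*ψ n),
        volume (Metric.closedBall ((((a:ℝ)/m : ℝ) : UnitAddCircle)) (ψ m / 2))
      ≤ ∑ _a ∈ Sset m n (m*n*ψ n), ENNReal.ofReal (ψ m) := Finset.sum_le_sum hball
    _ = ((Sset m n (m*n*ψ n)).card : ENNReal) * ENNReal.ofReal (ψ m) := by
        rw [Finset.sum_const, nsmul_eq_mul]

lemma real_lt_of_inv_lt_inv {x y : ℝ} (hx : 0 < x) (hy : 0 < y) (h : x⁻¹ < y⁻¹) : y < x := by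
  have h1 := mul_inv_cancel₀ (ne_of_gt hx)
  have h2 := mul_inv_cancel₀ (ne_of_gt hy)
  have hx' := inv_pos.mpr hx
  have hy' := inv_pos.mpr hy
  nlinarith [mul_pos hx hy, mul_lt_mul_of_pos_left h (mul_pos hx hy)]

lemma real_le_of_inv_le_inv {x y : ℝ} (hx : 0 < x) (hy : 0 < y) (h : x⁻¹ ≤ y⁻¹) : y ≤ x := by
  have h1 := mul_inv_cancel₀ (ne_of_gt hx)
  have h2 := mul_inv_cancel₀ (ne_of_gt hy)
  have hx' := inv_pos.mpr hx
  have hy' := inv_pos.mpr hy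
  nlinarith [mul_pos hx hy, mul_le_mul_of_nonneg_left h (le_of_lt (mul_pos hx hy))]

lemma step2 (hm0 : 0 < m) (hn0 : 0 < n) (hpm : ¬ p ∣ m) (hpn : ¬ p ∣ n)
    (hj : ψ m = ((p:ℝ)^j)⁻¹) (hk : ψ n = ((p:ℝ)^k)⁻¹)
    (hmn : ψ m ≤ ψ n) (hm4 : ψ m < 1/(4*(m:ℝ))) :
    ((Sset m n (m*n*ψ n)).card : ENNReal) * ENNReal.ofReal (ψ m) ≤
      μ (padicE p ψ m ∩ padicE p ψ n) := by
  have hp0 : 0 < p := (Fact.out : p.Prime).pos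
  have hm' : (0:ℝ) < m := by exact_mod_cast hm0
  have hn' : (0:ℝ) < n := by exact_mod_cast hn0
  have hmZ : (m:ℤ) ≠ 0 := by exact_mod_cast hm0.ne'
  have hpj' : (0:ℝ) < (p:ℝ)^j := by positivity
  have hpk' : (0:ℝ) < (p:ℝ)^k := by positivity
  -- 4m < p^j
  have h4m : (4*(m:ℝ)) < (p:ℝ)^j := by
    rw [hj] at hm4
    have := real_lt_of_inv_lt_inv hpj' (by positivity : (0:ℝ) < 4*m)
      (by rw [one_div] at hm4; exact hm4)
    exact this
  have h4mZ : (4*(m:ℤ)) < (p:ℤ)^j := by exact_mod_cast h4m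
  -- coprimality
  have cpm : IsCoprime ((p:ℤ)) (m:ℤ) := by
    rw [Int.isCoprime_iff_gcd_eq_one, Int.gcd_natCast_natCast]
    exact (Nat.Prime.coprime_iff_not_dvd (Fact.out : p.Prime)).mpr hpm
  have cpn : IsCoprime ((p:ℤ)) (n:ℤ) := by
    rw [Int.isCoprime_iff_gcd_eq_one, Int.gcd_natCast_natCast]
    exact (Nat.Prime.coprime_iff_not_dvd (Fact.out : p.Prime)).mpr hpn
  have cpkm : IsCoprime ((p:ℤ)^k) (m:ℤ) := cpm.pow_left
  have cpkn : IsCoprime ((p:ℤ)^k) (n:ℤ) := cpn.pow_left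
  -- choose witnesses
  have hbS : ∀ a : ℤ, a ∈ Sset m n (m*n*ψ n) →
      ∃ b : ℤ, Int.gcd b n = 1 ∧ |((a*(n:ℤ) - b*(m:ℤ) : ℤ) : ℝ)| ≤ m*n*ψ n :=
    fun a ha => (mem_Sset.mp ha).2.2
  choose! bfun hbg hbb using hbS
  set c : ℤ → ℤ := fun a => a*(n:ℤ) - bfun a * m with hc
  set a' : ℤ → ℤ := fun a => ((p:ℤ)^k * a - 1) % m + 1 with ha'
  set bb : ℤ → ℤ := fun a => (a' a * n - (p:ℤ)^k * c a) / m with hbbdef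
  set A : ℤ → ℤ := fun a => if bb a ≤ n then a' a else a' a - m with hA
  set B : ℤ → ℤ := fun a => if bb a ≤ n then bb a else bb a - n with hB
  -- basic properties of a'
  have ha'mem : ∀ a : ℤ, 1 ≤ a' a ∧ a' a ≤ m := by
    intro a
    have h1 := Int.emod_nonneg ((p:ℤ)^k * a - 1) hmZ
    have h2 := Int.emod_lt_of_pos ((p:ℤ)^k * a - 1) (by exact_mod_cast hm0 : (0:ℤ) < m)
    constructor <;> simp only [ha'] <;> linarith
  have ha'mod : ∀ a : ℤ, ∃ s : ℤ, a' a = (p:ℤ)^k * a + m * s := by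
    intro a
    refine ⟨-(((p:ℤ)^k * a - 1) / m), ?_⟩
    simp only [ha']
    rw [Int.emod_def]
    ring
  -- facts for a ∈ S
  have key : ∀ a : ℤ, a ∈ Sset m n (m*n*ψ n) →
      (bb a * m = a' a * n - (p:ℤ)^k * c a) ∧ (∃ s : ℤ, bb a = (p:ℤ)^k * bfun a + n * s) ∧
        |(p:ℤ)^k * c a| ≤ m*n := by
    intro a haS
    obtain ⟨s, hs⟩ := ha'mod a
    have hcb : |(p:ℤ)^k * c a| ≤ (m:ℤ)*n := by
      have h1 : |((c a : ℤ) : ℝ)| ≤ m*n*ψ n := hbb a haS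
      have h2 : ((p:ℝ)^k) * |((c a : ℤ) : ℝ)| ≤ m*n := by
        rw [hk] at h1
        calc ((p:ℝ)^k) * |((c a : ℤ) : ℝ)| ≤ ((p:ℝ)^k) * (m*n*((p:ℝ)^k)⁻¹) := by
              apply mul_le_mul_of_nonneg_left h1 (le_of_lt hpk')
          _ = m*n := by field_simp
      have h3 : |(((p:ℤ)^k * c a : ℤ) : ℝ)| ≤ ((m:ℝ)*n) := by
        push_cast
        rw [abs_mul, abs_of_pos (by positivity : (0:ℝ) < (p:ℝ)^k)]
        push_cast at h2
        exact h2
      exact_mod_cast h3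
    have hmdvd : (m:ℤ) ∣ (a' a * n - (p:ℤ)^k * c a) := by
      refine ⟨s*n + (p:ℤ)^k * bfun a, ?_⟩
      simp only [hc]
      rw [hs]
      ring
    have hbbm : bb a * m = a' a * n - (p:ℤ)^k * c a := Int.ediv_mul_cancel hmdvd
    refine ⟨hbbm, ⟨s, ?_⟩, hcb⟩
    · have hexp : ((p:ℤ)^k * bfun a + n * s) * m = a' a * n - (p:ℤ)^k * c a := by
        simp only [hc]
        rw [hs]
        ring
      have := hbbm.trans hexp.symm
      exact mul_right_cancel₀ hmZ this
  -- bounds on bb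
  have hbbub : ∀ a : ℤ, a ∈ Sset m n (m*n*ψ n) → bb a ≤ 2*n ∧ -(n:ℤ) < bb a := by
    intro a haS
    obtain ⟨hbbm, _, hcb⟩ := key a haS
    obtain ⟨ha'1, ha'2⟩ := ha'mem a
    have hnZ : (0:ℤ) < n := by exact_mod_cast hn0
    have hmZ' : (0:ℤ) < m := by exact_mod_cast hm0
    have habs := abs_le.mp hcb
    have ha'n : a' a * n ≤ m * n := mul_le_mul_of_nonneg_right ha'2 (le_of_lt hnZ)
    have ha'n1 : (n:ℤ) ≤ a' a * n := le_mul_of_one_le_left (le_of_lt hnZ) ha'1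
    constructor
    · have h1 : bb a * m ≤ (2*n) * m := by nlinarith [hbbm]
      exact le_of_mul_le_mul_right h1 hmZ'
    · have h1 : (-(n:ℤ)) * m < bb a * m := by nlinarith [hbbm]
      exact lt_of_mul_lt_mul_right h1 (le_of_lt hmZ')
  -- A B identities
  have hABid : ∀ a : ℤ, A a * n - B a * m = a' a * n - bb a * m := by
    intro a
    simp only [hA, hB]
    split <;> ring
  have hApk : ∀ a : ℤ, ∃ s : ℤ, A a = (p:ℤ)^k * a + m * s := by
    intro a
    obtain ⟨s, hs⟩ := ha'mod a
    simp only [hA]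
    split
    · exact ⟨s, hs⟩
    · exact ⟨s - 1, by rw [hs]; ring⟩
  -- the balls
  set ball : ℤ → Set ℤ_[p] := fun a => Metric.closedBall (padicCtr (A a) hpm) (ψ m)
    with hballdef
  have hsub : ∀ a ∈ Sset m n (m*n*ψ n), ball a ⊆ padicE p ψ m ∩ padicE p ψ n := by
    intro a haS x hx
    obtain ⟨⟨h1a, h2a⟩, hgc, _⟩ := mem_Sset.mp haS
    obtain ⟨hbbm, ⟨s2, hs2⟩, hcb⟩ := key a haS
    obtain ⟨hup, hlo⟩ := hbbub a haS
    obtain ⟨ha'1, ha'2⟩ := ha'mem a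
    obtain ⟨s, hs⟩ := hApk a
    have hxm : ‖(x : ℚ_[p]) - (A a : ℚ_[p]) / (m : ℚ_[p])‖ ≤ ψ m :=
      (mem_ball_iff' hpm (A a) (ψ m) x).mpr hx
    have hAgcd : Int.gcd (A a) m = 1 := by
      rw [← Int.isCoprime_iff_gcd_eq_one]
      have : IsCoprime ((p:ℤ)^k * a) (m:ℤ) := cpkm.mul_left
        (Int.isCoprime_iff_gcd_eq_one.mpr hgc)
      have := this.add_mul_left_left s
      rwa [← hs] at this
    have hAbd : |A a| ≤ (m:ℤ) := by
      obtain ⟨h1', h2'⟩ := ha'mem a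
      simp only [hA]
      split <;> (apply abs_le.mpr; constructor <;> linarith)
    have hBgcd : Int.gcd (B a) n = 1 := by
      rw [← Int.isCoprime_iff_gcd_eq_one]
      have h1 : IsCoprime ((p:ℤ)^k * bfun a) (n:ℤ) := cpkn.mul_left
        (Int.isCoprime_iff_gcd_eq_one.mpr (hbg a haS))
      simp only [hB]
      split
      · rw [hs2]
        exact h1.add_mul_left_left s2
      · have heq2 : bb a - n = (p:ℤ)^k * bfun a + (n:ℤ) * (s2 - 1) := by rw [hs2]; ring
        rw [heq2]
        exact h1.add_mul_left_left (s2 - 1)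
    have hBbd : |B a| ≤ (n:ℤ) := by
      simp only [hB]
      split <;> rename_i hsp <;> (apply abs_le.mpr; constructor <;> linarith)
    have hABc : A a * n - B a * m = (p:ℤ)^k * c a := by
      rw [hABid a, hbbm]
      ring
    have hdist : ‖(A a : ℚ_[p])/(m:ℚ_[p]) - (B a : ℚ_[p])/(n:ℚ_[p])‖ ≤ ψ n := by
      rw [dist_centers _ _ hpm hpn, hk]
      have : ((p:ℤ)^k) ∣ (A a * n - B a * m) := ⟨c a, hABc⟩
      have hnorm := (Padic.norm_int_le_pow_iff_dvd (A a * (n:ℤ) - B a * (m:ℤ)) k).mpr this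
      rw [zpow_neg, zpow_natCast] at hnorm
      exact hnorm
    refine ⟨⟨A a, hAbd, hAgcd, hxm⟩, ⟨B a, hBbd, hBgcd, ?_⟩⟩
    have heq : (x : ℚ_[p]) - (B a : ℚ_[p]) / (n : ℚ_[p]) =
        ((x : ℚ_[p]) - (A a : ℚ_[p]) / (m : ℚ_[p])) +
          ((A a : ℚ_[p])/(m:ℚ_[p]) - (B a : ℚ_[p])/(n:ℚ_[p])) := by ring
    rw [heq]
    exact le_trans (Padic.nonarchimedean _ _) (max_le (le_trans hxm hmn) hdist)
  -- injectivity mod m hence disjointness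
  have hinj : ∀ a ∈ Sset m n (m*n*ψ n), ∀ a₂ ∈ Sset m n (m*n*ψ n), a ≠ a₂ →
      A a ≠ A a₂ := by
    intro a haS a₂ ha₂S hne heq
    obtain ⟨s, hs⟩ := hApk a
    obtain ⟨t, ht⟩ := hApk a₂
    obtain ⟨⟨h1a, h2a⟩, _, _⟩ := mem_Sset.mp haS
    obtain ⟨⟨h1b, h2b⟩, _, _⟩ := mem_Sset.mp ha₂S
    have hdvd : (m:ℤ) ∣ (a - a₂) * (p:ℤ)^k := by
      refine ⟨t - s, ?_⟩
      have hh : (p:ℤ)^k * a + m * s = (p:ℤ)^k * a₂ + m * t := by rw [← hs, ← ht, heq]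
      linear_combination hh
    have hdvd2 : (m:ℤ) ∣ (a - a₂) := cpkm.symm.dvd_of_dvd_mul_right hdvd
    have hne0 : a - a₂ ≠ 0 := fun h => hne (by linarith [sub_eq_zero.mp h])
    have hle := Int.le_of_dvd (abs_pos.mpr hne0) ((dvd_abs _ _).mpr hdvd2)
    have habs : |a - a₂| < (m:ℤ) := abs_sub_lt_iff.mpr ⟨by linarith, by linarith⟩
    linarith
  -- disjointness of balls
  have hrad : ψ m = (p:ℝ)^(-(j:ℤ)) := by rw [hj, zpow_neg, zpow_natCast]
  have hdisj : (↑(Sset m n (m*n*ψ n)) : Set ℤ).PairwiseDisjoint ball := by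
    intro x hxS y hyS hxy
    apply Set.disjoint_left.mpr
    intro z hzx hzy
    simp only [hballdef, Metric.mem_closedBall] at hzx hzy
    rw [dist_eq_norm, PadicInt.norm_def] at hzx hzy
    have hzx' : ‖(z:ℚ_[p]) - (A x : ℚ_[p])/(m:ℚ_[p])‖ ≤ ψ m := hzx
    have hzy' : ‖(z:ℚ_[p]) - (A y : ℚ_[p])/(m:ℚ_[p])‖ ≤ ψ m := hzy
    have hcd : ‖((A x - A y : ℤ) : ℚ_[p])‖ ≤ (p:ℝ)^(-(j:ℤ)) := by
      have hmq := padic_natCast_ne_zero (p := p) hpm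
      have heq : ((A x - A y : ℤ) : ℚ_[p]) =
          ((A x : ℚ_[p])/(m:ℚ_[p]) - (A y : ℚ_[p])/(m:ℚ_[p])) * (m:ℚ_[p]) := by
        push_cast
        field_simp
      rw [heq, norm_mul, norm_natCast_eq_one hpm, mul_one]
      have heq2 : (A x : ℚ_[p])/(m:ℚ_[p]) - (A y : ℚ_[p])/(m:ℚ_[p]) =
          (-((z:ℚ_[p]) - (A x : ℚ_[p])/(m:ℚ_[p]))) + ((z:ℚ_[p]) - (A y : ℚ_[p])/(m:ℚ_[p])) := by
        ring
      rw [heq2]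
      refine le_trans (Padic.nonarchimedean _ _) (max_le ?_ ?_)
      · rw [norm_neg, ← hrad]; exact hzx'
      · rw [← hrad]; exact hzy'
    have hdvdj : ((p:ℤ)^j) ∣ (A x - A y) := by
      rw [← Padic.norm_int_le_pow_iff_dvd]
      exact hcd
    have hAne : A x ≠ A y := hinj x hxS y hyS hxy
    have hne0 : A x - A y ≠ 0 := sub_ne_zero.mpr hAne
    have hle := Int.le_of_dvd (abs_pos.mpr hne0) ((dvd_abs _ _).mpr hdvdj)
    have hAx : |A x| ≤ (m:ℤ) := by
      obtain ⟨h1', h2'⟩ := ha'mem x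
      simp only [hA]
      split <;> (apply abs_le.mpr; constructor <;> linarith)
    have hAy : |A y| ≤ (m:ℤ) := by
      obtain ⟨h1', h2'⟩ := ha'mem y
      simp only [hA]
      split <;> (apply abs_le.mpr; constructor <;> linarith)
    have habx := abs_le.mp hAx
    have haby := abs_le.mp hAy
    have h2m : |A x - A y| ≤ 2*(m:ℤ) := le_trans (abs_sub _ _) (by linarith)
    linarith
  -- conclude
  have hμball : ∀ a ∈ Sset m n (m*n*ψ n), μ (ball a) = ENNReal.ofReal (ψ m) := by
    intro a _
    simp only [hballdef]
    rw [hrad, padic_ball_measure μ j, ← ofReal_inv_pow p j hp0, ← hj, hrad]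
  calc ((Sset m n (m*n*ψ n)).card : ENNReal) * ENNReal.ofReal (ψ m)
      = ∑ a ∈ Sset m n (m*n*ψ n), μ (ball a) := by
        rw [Finset.sum_congr rfl hμball, Finset.sum_const, nsmul_eq_mul]
    _ = μ (⋃ a ∈ Sset m n (m*n*ψ n), ball a) :=
        (measure_biUnion_finset hdisj (fun a _ => measurableSet_closedBall)).symm
    _ ≤ μ (padicE p ψ m ∩ padicE p ψ n) := measure_mono (Set.iUnion₂_subset hsub)

lemma step3 (hm0 : 0 < m) (hn0 : 0 < n) (hpm : ¬ p ∣ m) (hpn : ¬ p ∣ n)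
    (hj : ψ m = ((p:ℝ)^j)⁻¹) (hk : ψ n = ((p:ℝ)^k)⁻¹) (hmn : ψ m ≤ ψ n) :
    μ (padicE p ψ m ∩ padicE p ψ n) ≤
      ((Pset p m n k).card : ENNReal) * ENNReal.ofReal (ψ m) := by
  have hp0 : 0 < p := (Fact.out : p.Prime).pos
  have hsub : padicE p ψ m ∩ padicE p ψ n ⊆
      ⋃ a ∈ Pset p m n k, Metric.closedBall (padicCtr a hpm) (ψ m) := by
    rintro x ⟨⟨a, ha, hagcd, hax⟩, ⟨b, hb, hbgcd, hbx⟩⟩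
    have hcdist : ‖((a*(n:ℤ) - b*(m:ℤ) : ℤ) : ℚ_[p])‖ ≤ (p:ℝ)^(-(k:ℤ)) := by
      rw [← dist_centers a b hpm hpn]
      have heq : (a:ℚ_[p])/(m:ℚ_[p]) - (b:ℚ_[p])/(n:ℚ_[p]) =
          (-((x:ℚ_[p]) - (a:ℚ_[p])/(m:ℚ_[p]))) + ((x:ℚ_[p]) - (b:ℚ_[p])/(n:ℚ_[p])) := by ring
      rw [heq]
      refine le_trans (Padic.nonarchimedean _ _) (max_le ?_ ?_)
      · rw [norm_neg]
        refine le_trans hax (le_trans hmn ?_)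
        rw [hk, zpow_neg, zpow_natCast]
      · refine le_trans hbx ?_
        rw [hk, zpow_neg, zpow_natCast]
    have hdvd : (p:ℤ)^k ∣ (a*(n:ℤ) - b*(m:ℤ)) := by
      rw [← Padic.norm_int_le_pow_iff_dvd]
      exact_mod_cast hcdist
    have haP : a ∈ Pset p m n k := by
      rw [mem_Pset]
      exact ⟨abs_le.mp ha, hagcd, b, hb, hbgcd, hdvd⟩
    exact Set.mem_biUnion haP ((mem_ball_iff' hpm a (ψ m) x).mp hax)
  refine le_trans (measure_mono hsub) (le_trans (measure_biUnion_finset_le _ _) ?_)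
  have hball : ∀ a ∈ Pset p m n k,
      μ (Metric.closedBall (padicCtr a hpm) (ψ m)) = ENNReal.ofReal (ψ m) := by
    intro a _
    have hrad : ψ m = (p:ℝ)^(-(j:ℤ)) := by rw [hj, zpow_neg, zpow_natCast]
    rw [hrad, padic_ball_measure μ j _, ← ofReal_inv_pow p j hp0, ← hj, hrad]
  exact le_of_eq (by rw [Finset.sum_congr rfl hball, Finset.sum_const, nsmul_eq_mul])

lemma step4 (hm0 : 0 < m) (hn0 : 0 < n) (hpm : ¬ p ∣ m) (hpn : ¬ p ∣ n)
    (hk : ψ n = ((p:ℝ)^k)⁻¹) :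
    (Pset p m n k).card ≤ 3 * (Sset m n (2*(m*n*ψ n))).card := by
  classical
  have hp0 : 0 < p := (Fact.out : p.Prime).pos
  have hm' : (0:ℝ) < m := by exact_mod_cast hm0
  have hn' : (0:ℝ) < n := by exact_mod_cast hn0
  have hmZ : (m:ℤ) ≠ 0 := by exact_mod_cast hm0.ne'
  have hmZ' : (0:ℤ) < m := by exact_mod_cast hm0
  have hnZ : (0:ℤ) < n := by exact_mod_cast hn0
  have hpk' : (0:ℝ) < (p:ℝ)^k := by positivity
  have cpm : IsCoprime ((p:ℤ)) (m:ℤ) := by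
    rw [Int.isCoprime_iff_gcd_eq_one, Int.gcd_natCast_natCast]
    exact (Nat.Prime.coprime_iff_not_dvd (Fact.out : p.Prime)).mpr hpm
  have cpkm : IsCoprime ((p:ℤ)^k) (m:ℤ) := cpm.pow_left
  obtain ⟨u, v, huv⟩ := cpkm
  have cum : IsCoprime u (m:ℤ) := ⟨(p:ℤ)^k, v, by linear_combination huv⟩
  set f : ℤ → ℤ := fun a => (u*a - 1) % m + 1 with hf
  have hfmem : ∀ a : ℤ, 1 ≤ f a ∧ f a ≤ m := by
    intro a
    have h1 := Int.emod_nonneg (u*a - 1) hmZ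
    have h2 := Int.emod_lt_of_pos (u*a - 1) hmZ'
    constructor <;> simp only [hf] <;> linarith
  have hfmod : ∀ a : ℤ, ∃ s : ℤ, f a = u*a + m*s := by
    intro a
    refine ⟨-((u*a - 1) / m), ?_⟩
    simp only [hf]
    rw [Int.emod_def]
    ring
  -- image lands in the T-set
  have himg : ∀ a ∈ Pset p m n k, f a ∈ Sset m n (2*(m*n*ψ n)) := by
    intro a haP
    obtain ⟨⟨ha1, ha2⟩, hgcd, b, hbbd, hbgcd, hdvd⟩ := mem_Pset.mp haP
    obtain ⟨c', hc'⟩ := hdvd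
    obtain ⟨s, hfa⟩ := hfmod a
    obtain ⟨hf1, hf2⟩ := hfmem a
    have hmdvd : (m:ℤ) ∣ (f a * n - c') := by
      refine ⟨u*b - v*c' + s*n, ?_⟩
      linear_combination ((n:ℤ)) * hfa + (u) * hc' + (c') * huv
    set bt : ℤ := (f a * n - c') / m with hbt
    have hbtm : bt * m = f a * n - c' := Int.ediv_mul_cancel hmdvd
    have hbteq : (p:ℤ)^k * bt = b + n * ((p:ℤ)^k * s - v*a) := by
      apply mul_right_cancel₀ hmZ
      linear_combination ((p:ℤ)^k) * hbtm + ((p:ℤ)^k * n) * hfa + hc' + (a*(n:ℤ)) * huv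
    have hbtgcd : Int.gcd bt n = 1 := by
      rw [← Int.isCoprime_iff_gcd_eq_one]
      have h1 : IsCoprime (b + (n:ℤ) * ((p:ℤ)^k * s - v*a)) (n:ℤ) :=
        (Int.isCoprime_iff_gcd_eq_one.mpr hbgcd).add_mul_left_left _
      rw [← hbteq] at h1
      exact h1.of_mul_left_right
    rw [mem_Sset]
    refine ⟨⟨hf1, hf2⟩, ?_, bt, hbtgcd, ?_⟩
    · rw [← Int.isCoprime_iff_gcd_eq_one]
      have : IsCoprime (u*a) (m:ℤ) :=
        IsCoprime.mul_left cum (Int.isCoprime_iff_gcd_eq_one.mpr hgcd)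
      have h2 := this.add_mul_left_left s
      rwa [← hfa] at h2
    · have hceq : f a * (n:ℤ) - bt * m = c' := by linarith [hbtm]
      have hcbd : |c'| * (p:ℤ)^k ≤ 2*(m*n) := by
        have h1 : |a*(n:ℤ) - b*m| ≤ 2*(m*n) := by
          have haabs : |a| ≤ (m:ℤ) := abs_le.mpr ⟨ha1, ha2⟩
          have hh1 : |a*(n:ℤ)| ≤ m*n := by
            rw [abs_mul, abs_of_pos hnZ]
            exact mul_le_mul_of_nonneg_right haabs (le_of_lt hnZ)
          have hh2 : |b*(m:ℤ)| ≤ n*m := by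
            rw [abs_mul, abs_of_pos hmZ']
            exact mul_le_mul_of_nonneg_right hbbd (le_of_lt hmZ')
          calc |a*(n:ℤ) - b*m| ≤ |a*(n:ℤ)| + |b*(m:ℤ)| := abs_sub _ _
            _ ≤ m*n + n*m := add_le_add hh1 hh2
            _ = 2*(m*n) := by ring
        rw [hc'] at h1
        rw [abs_mul, abs_pow, abs_of_nonneg (by positivity : (0:ℤ) ≤ (p:ℤ))] at h1
        linarith [h1]
      rw [hceq, hk]
      have hpkZ : (0:ℝ) < ((p:ℝ))^k := hpk'
      have hcast : |((c' : ℤ) : ℝ)| * (p:ℝ)^k ≤ 2*((m:ℝ)*n) := by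
        have := hcbd
        have h2 : (|c'| * (p:ℤ)^k : ℤ) ≤ (2*(m*n) : ℤ) := this
        calc |((c' : ℤ) : ℝ)| * (p:ℝ)^k = ((|c'| * (p:ℤ)^k : ℤ) : ℝ) := by
              push_cast [Int.cast_abs]
              ring
          _ ≤ ((2*((m:ℤ)*n) : ℤ) : ℝ) := by exact_mod_cast h2
          _ = 2*((m:ℝ)*n) := by push_cast; ring
      calc |((c' : ℤ) : ℝ)| = (|((c' : ℤ) : ℝ)| * (p:ℝ)^k) * ((p:ℝ)^k)⁻¹ := by
            field_simp
        _ ≤ (2*((m:ℝ)*n)) * ((p:ℝ)^k)⁻¹ := by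
            apply mul_le_mul_of_nonneg_right hcast (by positivity)
        _ = 2*((m:ℝ)*(n:ℝ)*((p:ℝ)^k)⁻¹) := by ring
  -- fibers have at most 3 elements
  have hfib : ∀ t ∈ (Pset p m n k).image f, ((Pset p m n k).filter (fun a => f a = t)).card ≤ 3 := by
    intro t ht
    obtain ⟨a₀, ha₀P, hfa₀⟩ := Finset.mem_image.mp ht
    set r : ℤ := a₀ % m with hr
    have hra₀ : (m:ℤ) ∣ (a₀ - r) := by
      rw [hr, Int.emod_def]
      exact ⟨a₀/m, by ring⟩
    have hr0 : 0 ≤ r := Int.emod_nonneg a₀ hmZ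
    have hrm : r < m := Int.emod_lt_of_pos a₀ hmZ'
    have hsubset : (Pset p m n k).filter (fun a => f a = t) ⊆ ({r - m, r, r + m} : Finset ℤ) := by
      intro a ha
      obtain ⟨haP, hfat⟩ := Finset.mem_filter.mp ha
      obtain ⟨⟨ha1, ha2⟩, _, _⟩ := mem_Pset.mp haP
      have hfeq : f a = f a₀ := by rw [hfat, hfa₀]
      obtain ⟨s1, hs1⟩ := hfmod a
      obtain ⟨s2, hs2⟩ := hfmod a₀
      have hudvd : (m:ℤ) ∣ u * (a - a₀) := by
        refine ⟨s2 - s1, ?_⟩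
        have := hs1 ▸ hs2 ▸ hfeq
        linear_combination this
      have hdvd : (m:ℤ) ∣ (a - a₀) := cum.symm.dvd_of_dvd_mul_left hudvd
      have hdr : (m:ℤ) ∣ (a - r) := by
        have := dvd_add hdvd hra₀
        simpa using this
      obtain ⟨q, hq⟩ := hdr
      have hq1 : -2 < q := by
        have h1 : (m:ℤ) * (-2) < m * q := by linarith [hq]
        exact lt_of_mul_lt_mul_left h1 (le_of_lt hmZ')
      have hq2 : q ≤ 1 := by
        have h1 : (m:ℤ) * q ≤ m * 1 := by linarith [hq]
        exact le_of_mul_le_mul_left h1 hmZ'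
      interval_cases q
      · simp only [Finset.mem_insert, Finset.mem_singleton]
        left; linarith [hq]
      · simp only [Finset.mem_insert, Finset.mem_singleton]
        right; left; linarith [hq]
      · simp only [Finset.mem_insert, Finset.mem_singleton]
        right; right; linarith [hq]
    calc ((Pset p m n k).filter (fun a => f a = t)).card ≤ ({r - m, r, r + m} : Finset ℤ).card :=
          Finset.card_le_card hsubset
      _ ≤ 3 := by
          refine le_trans (Finset.card_insert_le _ _) ?_
          simp [Finset.card_insert_le]
          exact lt_of_le_of_lt (Finset.card_insert_le _ _) (by simp)
  calc (Pset p m n k).card ≤ 3 * ((Pset p m n k).image f).card :=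
        Finset.card_le_mul_card_image _ 3 hfib
    _ ≤ 3 * (Sset m n (2*(m*n*ψ n))).card := by
        have : (Pset p m n k).image f ⊆ Sset m n (2*(m*n*ψ n)) := by
          intro t ht
          obtain ⟨a, haP, hfa⟩ := Finset.mem_image.mp ht
          exact hfa ▸ himg a haP
        exact Nat.mul_le_mul_left 3 (Finset.card_le_card this)

lemma step5 (hm0 : 0 < m) (hn0 : 0 < n) (hψm : 0 ≤ ψ m) (hψn : 0 ≤ ψ n)
    (hmn : ψ m ≤ ψ n) (hm4 : ψ m < 1/(4*(m:ℝ))) (hn4 : ψ n < 1/(4*(n:ℝ))) :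
    ((Sset m n (2*(m*n*ψ n))).card : ENNReal) * ENNReal.ofReal (2 * ψ m) ≤
      volume (circleA (fun i => 2*ψ i) m ∩ circleA (fun i => 2*ψ i) n) := by
  classical
  have hm' : (0:ℝ) < m := by exact_mod_cast hm0
  have hn' : (0:ℝ) < n := by exact_mod_cast hn0
  have hnZ : (n:ℤ) ≠ 0 := by exact_mod_cast hn0.ne'
  have hnZ' : (0:ℤ) < n := by exact_mod_cast hn0
  have hbT : ∀ a : ℤ, a ∈ Sset m n (2*(m*n*ψ n)) →
      ∃ b : ℤ, Int.gcd b n = 1 ∧ |((a*(n:ℤ) - b*(m:ℤ) : ℤ) : ℝ)| ≤ 2*(m*n*ψ n) :=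
    fun a ha => (mem_Sset.mp ha).2.2
  choose! bf hbg hbb using hbT
  set w : ℤ → ℝ := fun a => if (bf a:ℝ)/n ≤ (a:ℝ)/m then (a:ℝ)/m - ψ m else (a:ℝ)/m + ψ m
    with hw
  have hwu : ∀ a : ℤ, |w a - (a:ℝ)/m| = ψ m := by
    intro a
    simp only [hw]
    split <;> simp [abs_of_nonneg, abs_of_nonpos, hψm] <;> rw [abs_of_nonneg hψm]
  have hdT : ∀ a ∈ Sset m n (2*(m*n*ψ n)), |(a:ℝ)/m - (bf a:ℝ)/n| ≤ 2*ψ n := by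
    intro a haT
    have h1 := hbb a haT
    have heq : (a:ℝ)/m - (bf a:ℝ)/n = ((a*(n:ℤ) - bf a*(m:ℤ) : ℤ) : ℝ)/((m:ℝ)*n) := by
      push_cast
      field_simp
    rw [heq, abs_div, abs_of_pos (by positivity : (0:ℝ) < (m:ℝ)*n), div_le_iff₀ (by positivity)]
    calc |((a*(n:ℤ) - bf a*(m:ℤ) : ℤ) : ℝ)| ≤ 2*(m*n*ψ n) := h1
      _ = 2*ψ n * ((m:ℝ)*n) := by ring
  have hwv : ∀ a ∈ Sset m n (2*(m*n*ψ n)), |w a - (bf a:ℝ)/n| ≤ 2*ψ n - ψ m := by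
    intro a haT
    have hd := hdT a haT
    have habs := abs_le.mp hd
    simp only [hw]
    split <;> rename_i hcase <;> (apply abs_le.mpr; constructor <;> linarith)
  -- the balls are inside the intersection
  have hsub : ∀ a ∈ Sset m n (2*(m*n*ψ n)),
      Metric.closedBall (((w a : ℝ) : UnitAddCircle)) (ψ m) ⊆
        circleA (fun i => 2*ψ i) m ∩ circleA (fun i => 2*ψ i) n := by
    intro a haT x hx
    rw [Metric.mem_closedBall, dist_eq_norm] at hx
    obtain ⟨⟨ha1, ha2⟩, hgcd, _⟩ := mem_Sset.mp haT
    have hxu : ‖x - (((a:ℝ)/m : ℝ) : UnitAddCircle)‖ ≤ 2*ψ m := by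
      have heq : x - (((a:ℝ)/m : ℝ) : UnitAddCircle) =
          (x - ((w a : ℝ) : UnitAddCircle)) + (((w a - (a:ℝ)/m : ℝ)) : UnitAddCircle) := by
        rw [AddCircle.coe_sub]
        abel
      rw [heq]
      refine le_trans (norm_add_le _ _) ?_
      have h2 := le_trans (unit_norm_le_abs (w a - (a:ℝ)/m)) (le_of_eq (hwu a))
      linarith
    have hxv : ‖x - (((bf a:ℝ)/n : ℝ) : UnitAddCircle)‖ ≤ 2*ψ n := by
      have heq : x - (((bf a:ℝ)/n : ℝ) : UnitAddCircle) =
          (x - ((w a : ℝ) : UnitAddCircle)) + (((w a - (bf a:ℝ)/n : ℝ)) : UnitAddCircle) := by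
        rw [AddCircle.coe_sub]
        abel
      rw [heq]
      refine le_trans (norm_add_le _ _) ?_
      have h2 := le_trans (unit_norm_le_abs (w a - (bf a:ℝ)/n)) (hwv a haT)
      linarith
    constructor
    · refine ⟨a.toNat, ?_, ?_, ?_, ?_⟩
      · omega
      · omega
      · have : ((a.toNat : ℤ)) = a := Int.toNat_of_nonneg (by linarith)
        rw [← Int.gcd_natCast_natCast, this]
        exact hgcd
      · have hcast : ((a.toNat : ℕ) : ℝ) = ((a:ℤ):ℝ) := by
          rw [← Int.cast_natCast, Int.toNat_of_nonneg (by linarith : (0:ℤ) ≤ a)]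
        simp only [hcast]
        exact hxu
    · -- the n-side witness
      set b0 : ℤ := bf a % n with hb0
      have hb00 : 0 ≤ b0 := Int.emod_nonneg _ hnZ
      have hb0n : b0 < n := Int.emod_lt_of_pos _ hnZ'
      have hb0g : Int.gcd b0 n = 1 := by
        have : b0 = bf a + (n:ℤ) * (-(bf a / n)) := by
          simp only [hb0]
          rw [Int.emod_def]
          ring
        rw [this, int_gcd_add_mul]
        exact hbg a haT
      by_cases hz : b0 = 0
      · -- then n = 1
        have hn1 : n = 1 := by
          have hdvd : (n:ℤ) ∣ bf a := Int.dvd_of_emod_eq_zero (by rw [← hb0]; exact hz)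
          have h1 : (n:ℤ) ∣ (Int.gcd (bf a) n : ℤ) := Int.dvd_coe_gcd hdvd dvd_rfl
          rw [hbg a haT] at h1
          have := Int.le_of_dvd one_pos h1
          omega
        refine ⟨1, le_refl _, by omega, by simp [hn1], ?_⟩
        have hpt : ((((1:ℕ):ℝ)/(n:ℝ) : ℝ) : UnitAddCircle) =
            (((bf a:ℝ)/n : ℝ) : UnitAddCircle) := by
          have hdvd : (n:ℤ) ∣ bf a := Int.dvd_of_emod_eq_zero (by rw [← hb0]; exact hz)
          obtain ⟨q, hq⟩ := hdvd
          have : (bf a:ℝ)/n = ((1:ℕ):ℝ)/(n:ℝ) + ((q - 1 : ℤ):ℝ) := by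
            rw [hq, hn1]
            push_cast
            ring
          rw [this, unit_norm_int_shift]
        rw [hpt]
        exact hxv
      · refine ⟨b0.toNat, by omega, by omega, ?_, ?_⟩
        · have : ((b0.toNat : ℤ)) = b0 := Int.toNat_of_nonneg hb00
          rw [← Int.gcd_natCast_natCast, this]
          exact hb0g
        · have hdvd : (n:ℤ) ∣ (b0 - bf a) := by
            refine ⟨-(bf a / n), ?_⟩
            simp only [hb0]
            rw [Int.emod_def]
            ring
          obtain ⟨q, hq⟩ := hdvd
          have hpt : ((((b0.toNat:ℕ):ℝ)/(n:ℝ) : ℝ) : UnitAddCircle) =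
              (((bf a:ℝ)/n : ℝ) : UnitAddCircle) := by
            have hcast : ((b0.toNat : ℕ) : ℝ) = (b0:ℝ) := by
              rw [← Int.cast_natCast, Int.toNat_of_nonneg hb00]
            have hint : b0 = bf a + (n:ℤ)*q := by linarith [hq]
            have hqr : (b0:ℝ) = (bf a:ℝ) + (n:ℝ)*(q:ℝ) := by exact_mod_cast hint
            have heq2 : ((b0.toNat:ℕ):ℝ)/(n:ℝ) = (bf a:ℝ)/n + ((q:ℤ):ℝ) := by
              rw [hcast, hqr]
              field_simp
            rw [heq2, unit_norm_int_shift]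
          rw [hpt]
          exact hxv
  -- disjointness
  have hdisj : (↑(Sset m n (2*(m*n*ψ n))) : Set ℤ).PairwiseDisjoint
      (fun a => Metric.closedBall (((w a : ℝ) : UnitAddCircle)) (ψ m)) := by
    intro a haT a₂ ha₂T hne
    apply Set.disjoint_left.mpr
    intro x hx hx₂
    rw [Metric.mem_closedBall, dist_eq_norm] at hx hx₂
    obtain ⟨⟨ha1, ha2⟩, _, _⟩ := mem_Sset.mp haT
    obtain ⟨⟨hb1, hb2⟩, _, _⟩ := mem_Sset.mp ha₂T
    have hfrac : 1/(m:ℝ) ≤ ‖((((a - a₂ : ℤ):ℝ)/m : ℝ) : UnitAddCircle)‖ := by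
      apply circle_norm_frac_lb _ hm0
      intro hdvd
      have hne0 : a - a₂ ≠ 0 := sub_ne_zero.mpr hne
      have hle := Int.le_of_dvd (abs_pos.mpr hne0) ((dvd_abs _ _).mpr hdvd)
      have habs : |a - a₂| < (m:ℤ) := abs_sub_lt_iff.mpr ⟨by linarith, by linarith⟩
      linarith
    have hdecomp : ((((a - a₂ : ℤ):ℝ)/m : ℝ) : UnitAddCircle) =
        (((((a:ℤ):ℝ)/m - w a : ℝ)) : UnitAddCircle) +
          ((x - ((w a₂ : ℝ) : UnitAddCircle)) - (x - ((w a : ℝ) : UnitAddCircle))) +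
          (((w a₂ - ((a₂:ℤ):ℝ)/m : ℝ)) : UnitAddCircle) := by
      have hr : ((a - a₂ : ℤ):ℝ)/m = (((a:ℤ):ℝ)/m - w a) + (w a - w a₂) + (w a₂ - ((a₂:ℤ):ℝ)/m) := by
        push_cast
        ring
      rw [hr, AddCircle.coe_add, AddCircle.coe_add, AddCircle.coe_sub, AddCircle.coe_sub,
        AddCircle.coe_sub]
      abel
    have hnorm : ‖((((a - a₂ : ℤ):ℝ)/m : ℝ) : UnitAddCircle)‖ ≤ 4*ψ m := by
      rw [hdecomp]
      refine le_trans (norm_add_le _ _) ?_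
      have h1 : ‖((((((a:ℤ):ℝ)/m - w a : ℝ))) : UnitAddCircle)‖ ≤ ψ m := by
        refine le_trans (unit_norm_le_abs _) ?_
        rw [abs_sub_comm]
        exact le_of_eq (hwu a)
      have h2 : ‖(x - ((w a₂ : ℝ) : UnitAddCircle)) - (x - ((w a : ℝ) : UnitAddCircle))‖ ≤ 2*ψ m := by
        refine le_trans (norm_sub_le _ _) ?_
        linarith
      have h3 : ‖(((w a₂ - ((a₂:ℤ):ℝ)/m : ℝ)) : UnitAddCircle)‖ ≤ ψ m := by
        refine le_trans (unit_norm_le_abs _) (le_of_eq (hwu a₂))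
      refine le_trans (add_le_add (norm_add_le _ _) le_rfl) ?_
      linarith
    have : 1/(m:ℝ) < 1/(m:ℝ) := by
      calc 1/(m:ℝ) ≤ ‖((((a - a₂ : ℤ):ℝ)/m : ℝ) : UnitAddCircle)‖ := hfrac
        _ ≤ 4*ψ m := hnorm
        _ < 4*(1/(4*m)) := by linarith
        _ = 1/m := by field_simp
    exact absurd this (lt_irrefl _)
  -- volume computation
  have hball : ∀ a ∈ Sset m n (2*(m*n*ψ n)),
      volume (Metric.closedBall (((w a : ℝ) : UnitAddCircle)) (ψ m)) =
        ENNReal.ofReal (2*ψ m) := by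
    intro a _
    rw [AddCircle.volume_closedBall]
    congr 1
    have h1 : 2*ψ m ≤ 1 := by
      have hm1 : (1:ℝ) ≤ (m:ℝ) := by exact_mod_cast hm0
      have h4 : 1/(4*(m:ℝ)) ≤ 1/2 := by
        rw [div_le_div_iff₀ (by linarith) (by norm_num)]
        linarith
      linarith
    rw [min_eq_right h1]
  calc ((Sset m n (2*(m*n*ψ n))).card : ENNReal) * ENNReal.ofReal (2 * ψ m)
      = ∑ a ∈ Sset m n (2*(m*n*ψ n)),
          volume (Metric.closedBall (((w a : ℝ) : UnitAddCircle)) (ψ m)) := by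
        rw [Finset.sum_congr rfl hball, Finset.sum_const, nsmul_eq_mul]
    _ = volume (⋃ a ∈ Sset m n (2*(m*n*ψ n)),
          Metric.closedBall (((w a : ℝ) : UnitAddCircle)) (ψ m)) :=
        (measure_biUnion_finset hdisj (fun a _ => measurableSet_closedBall)).symm
    _ ≤ volume (circleA (fun i => 2*ψ i) m ∩ circleA (fun i => 2*ψ i) n) :=
        measure_mono (Set.iUnion₂_subset hsub)

end Main

/-! ### Degenerate cases -/

lemma circle_zero (ψ' : ℕ → ℝ) (t : ℕ) (h0 : ψ' t ≤ 0) :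
    volume (circleA ψ' t) = 0 := by
  have hsub : circleA ψ' t ⊆
      ⋃ a ∈ Finset.Icc 1 t, Metric.closedBall ((((a:ℝ)/t : ℝ) : UnitAddCircle)) (ψ' t) := by
    rintro x ⟨a, ha1, hat, _, hax⟩
    refine Set.mem_biUnion (Finset.mem_Icc.mpr ⟨ha1, hat⟩) ?_
    rw [Metric.mem_closedBall, dist_eq_norm]
    exact hax
  refine le_antisymm (le_trans (measure_mono hsub) ?_) (zero_le)
  refine le_trans (measure_biUnion_finset_le _ _) ?_
  have : ∀ a ∈ Finset.Icc 1 t,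
      volume (Metric.closedBall ((((a:ℝ)/t : ℝ) : UnitAddCircle)) (ψ' t)) = 0 := by
    intro a _
    rw [AddCircle.volume_closedBall]
    have : min 1 (2 * ψ' t) ≤ 0 := le_trans (min_le_right _ _) (by linarith)
    simp [ENNReal.ofReal_eq_zero.mpr this]
  rw [Finset.sum_congr rfl this, Finset.sum_const_zero]

lemma padic_zero (ψ : ℕ → ℝ) (t : ℕ) (h0 : ψ t = 0) :
    μ (padicE p ψ t) = 0 := by
  have hsub : padicE p ψ t ⊆
      ⋃ a ∈ Finset.Icc (-(t:ℤ)) (t:ℤ), {x : ℤ_[p] | (x:ℚ_[p]) = (a:ℚ_[p])/(t:ℚ_[p])} := by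
    rintro x ⟨a, ha, _, hax⟩
    refine Set.mem_biUnion (Finset.mem_Icc.mpr (abs_le.mp ha)) ?_
    have : ‖(x : ℚ_[p]) - (a : ℚ_[p]) / (t : ℚ_[p])‖ = 0 :=
      le_antisymm (h0 ▸ hax) (norm_nonneg _)
    simpa [sub_eq_zero] using norm_eq_zero.mp this
  refine le_antisymm (le_trans (measure_mono hsub) ?_) (zero_le)
  refine le_trans (measure_biUnion_finset_le _ _) ?_
  have : ∀ a ∈ Finset.Icc (-(t:ℤ)) (t:ℤ),
      μ {x : ℤ_[p] | (x:ℚ_[p]) = (a:ℚ_[p])/(t:ℚ_[p])} = 0 := by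
    intro a _
    have hsub : {x : ℤ_[p] | (x:ℚ_[p]) = (a:ℚ_[p])/(t:ℚ_[p])}.Subsingleton := by
      intro x hx y hy
      exact Subtype.coe_injective (hx.trans hy.symm)
    rcases hsub.eq_empty_or_singleton with h | ⟨z, h⟩
    · rw [h]; exact measure_empty
    · rw [h]; exact padic_singleton μ z
  rw [Finset.sum_congr rfl this, Finset.sum_const_zero]

/-! ### Main theorem -/

/-- **Lemma 3 (Haynes): overlap estimates.** Suppose `ψ` takes values in
`{0} ∪ {p^(-j) : j ∈ ℕ}` and `ψ(n) < 1/(4n)` for all `n ≥ 1`.  Then for all `m, n`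
not divisible by `p`,
`λ(A_m(ψ/2) ∩ A_n(ψ/2)) ≤ μ_p(E_m(ψ) ∩ E_n(ψ)) ≤ (3/2)·λ(A_m(2ψ) ∩ A_n(2ψ))`. -/
theorem stmt13 (p : ℕ) [Fact p.Prime] [MeasurableSpace ℤ_[p]] [BorelSpace ℤ_[p]]
    (μ : Measure ℤ_[p]) [μ.IsAddHaarMeasure] [IsProbabilityMeasure μ]
    (ψ : ℕ → ℝ) (hψ : ∀ n, 0 ≤ ψ n)
    (hval : ∀ n : ℕ, ψ n = 0 ∨ ∃ j : ℕ, ψ n = ((p : ℝ) ^ j)⁻¹)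
    (hsmall : ∀ n : ℕ, 0 < n → ψ n < 1 / (4 * (n : ℝ)))
    (m n : ℕ) (hm : ¬ p ∣ m) (hn : ¬ p ∣ n) :
    volume (circleA (fun j => ψ j / 2) m ∩ circleA (fun j => ψ j / 2) n) ≤
        μ (padicE p ψ m ∩ padicE p ψ n) ∧
      μ (padicE p ψ m ∩ padicE p ψ n) ≤
        (3 / 2) * volume (circleA (fun j => 2 * ψ j) m ∩ circleA (fun j => 2 * ψ j) n) := by
  have hm0 : 0 < m := Nat.pos_of_ne_zero (by rintro rfl; exact hm (dvd_zero p))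
  have hn0 : 0 < n := Nat.pos_of_ne_zero (by rintro rfl; exact hn (dvd_zero p))
  -- degenerate cases
  rcases hval m with h0m | ⟨j, hj⟩
  · constructor
    · refine le_trans (le_trans (measure_mono Set.inter_subset_left) ?_) (zero_le)
      exact le_of_eq (circle_zero (fun i => ψ i / 2) m (by show ψ m / 2 ≤ 0; rw [h0m]; norm_num))
    · refine le_trans (le_trans (measure_mono Set.inter_subset_left) ?_) (zero_le)
      exact le_of_eq (padic_zero μ ψ m h0m)
  rcases hval n with h0n | ⟨k, hk⟩
  · constructor
    · refine le_trans (le_trans (measure_mono Set.inter_subset_right) ?_) (zero_le)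
      exact le_of_eq (circle_zero (fun i => ψ i / 2) n (by show ψ n / 2 ≤ 0; rw [h0n]; norm_num))
    · refine le_trans (le_trans (measure_mono Set.inter_subset_right) ?_) (zero_le)
      exact le_of_eq (padic_zero μ ψ n h0n)
  have key : ∀ m' n' j' k' : ℕ, 0 < m' → 0 < n' → ¬ p ∣ m' → ¬ p ∣ n' →
      ψ m' = ((p:ℝ)^j')⁻¹ → ψ n' = ((p:ℝ)^k')⁻¹ → ψ m' ≤ ψ n' →
      volume (circleA (fun i => ψ i / 2) m' ∩ circleA (fun i => ψ i / 2) n') ≤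
        μ (padicE p ψ m' ∩ padicE p ψ n') ∧
      μ (padicE p ψ m' ∩ padicE p ψ n') ≤
        (3 / 2) * volume (circleA (fun i => 2 * ψ i) m' ∩ circleA (fun i => 2 * ψ i) n') := by
    intro m' n' j' k' hm0' hn0' hpm' hpn' hj' hk' hmn'
    have hm4 : ψ m' < 1/(4*(m':ℝ)) := hsmall m' hm0'
    have hn4 : ψ n' < 1/(4*(n':ℝ)) := hsmall n' hn0'
    constructor
    · exact le_trans (step1 ψ m' n' hm0' hn0' (hψ m') hmn')
        (step2 μ ψ m' n' j' k' hm0' hn0' hpm' hpn' hj' hk' hmn' hm4)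
    · refine le_trans (step3 μ ψ m' n' j' k' hm0' hn0' hpm' hpn' hj' hk' hmn') ?_
      refine le_trans ?_ (mul_le_mul_right (step5 ψ m' n' hm0' hn0' (hψ m') (hψ n') hmn' hm4 hn4) _)
      have hcard := step4 ψ m' n' k' hm0' hn0' hpm' hpn' hk'
      calc ((Pset p m' n' k').card : ENNReal) * ENNReal.ofReal (ψ m')
          ≤ ((3 * (Sset m' n' (2*(m'*n'*ψ n'))).card : ℕ) : ENNReal) * ENNReal.ofReal (ψ m') := by
            gcongr <;> exact_mod_cast hcard
        _ = (3/2) * (((Sset m' n' (2*(m'*n'*ψ n'))).card : ENNReal) * ENNReal.ofReal (2 * ψ m')) := by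
            rw [ENNReal.ofReal_mul (by norm_num : (0:ℝ) ≤ 2)]
            push_cast
            have h2 : ((3:ENNReal)/2) * 2 = 3 := by
              rw [ENNReal.div_mul_cancel (by norm_num) (by norm_num)]
            calc (3 * ((Sset m' n' (2*(m'*n'*ψ n'))).card : ENNReal)) * ENNReal.ofReal (ψ m')
                = ((3/2) * 2) * ((Sset m' n' (2*(m'*n'*ψ n'))).card : ENNReal) * ENNReal.ofReal (ψ m') := by rw [h2]
              _ = (3/2) * (((Sset m' n' (2*(m'*n'*ψ n'))).card : ENNReal) *
                    (ENNReal.ofReal 2 * ENNReal.ofReal (ψ m'))) := by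
                  rw [ENNReal.ofReal_ofNat]
                  ring
  rcases le_total (ψ m) (ψ n) with hmn | hnm
  · exact key m n j k hm0 hn0 hm hn hj hk hmn
  · have := key n m k j hn0 hm0 hn hm hk hj hnm
    rw [Set.inter_comm (circleA (fun i => ψ i / 2) n), Set.inter_comm (padicE p ψ n),
      Set.inter_comm (circleA (fun i => 2 * ψ i) n)] at this
    exact this

end
end

section
/- Let p be a prime and let ψ : ℕ → ℝ be a non-negative function taking values in the set {0} ∪ {p^{−j} : j ≥ 0 an integer}. If n ∈ ℕ satisfies p ∤ n and 1/n ≤ ψ(n) < 1/(12·φ(n)), where φ is Euler's totient function, then μ_p(E_n(ψ)) ≥ φ(n)·ψ(n). -/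
open MeasureTheory Filter

noncomputable section

/-- `W_p(ψ)`: the points of `ℤ_p` lying in infinitely many of the sets `E_n(ψ)`. -/
def padicW (p : ℕ) [Fact p.Prime] (ψ : ℕ → ℝ) : Set ℤ_[p] :=
  {x | {n : ℕ | x ∈ padicE p ψ n}.Infinite}

section HaynesAux

open Finset
open scoped ENNReal

lemma intCast_dvd_iff_natAbs (m : ℕ) (z : ℤ) : (m:ℤ) ∣ z ↔ m ∣ z.natAbs := by
  rw [← Int.natAbs_dvd_natAbs, Int.natAbs_natCast]

/-- residues mod `r` avoiding `0` and `-c`. -/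
def allowedF (r : ℕ) (c : ℤ) : Finset ℕ :=
  (Finset.range r).filter (fun v => ¬((r:ℤ) ∣ (v:ℤ)) ∧ ¬((r:ℤ) ∣ ((v:ℤ) + c)))

lemma card_allowedF {r : ℕ} (hr : 2 ≤ r) (c : ℤ) :
    #(allowedF r c) ≤ r - 2 + (if (r:ℤ) ∣ c then 1 else 0) := by
  have hr0 : (0:ℤ) < r := by exact_mod_cast Nat.lt_of_lt_of_le two_pos hr
  by_cases h : (r:ℤ) ∣ c
  · simp only [h, if_pos]
    have hsub : allowedF r c ⊆ (range r).erase 0 := by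
      intro v hv
      simp only [allowedF, mem_filter] at hv
      refine mem_erase.2 ⟨?_, hv.1⟩
      rintro rfl
      exact hv.2.1 (by simp)
    calc #(allowedF r c) ≤ #((range r).erase 0) := card_le_card hsub
      _ = r - 1 := by rw [card_erase_of_mem (by simp [Nat.lt_of_lt_of_le two_pos hr]), card_range]
      _ ≤ r - 2 + 1 := by omega
  · simp only [h, if_neg, not_false_iff, add_zero]
    set w : ℕ := ((-c) % r).toNat with hw
    have hw0 : (0:ℤ) ≤ (-c) % r := Int.emod_nonneg _ (by positivity)
    have hwlt : ((-c) % r) < r := Int.emod_lt_of_pos _ hr0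
    have hwcast : (w:ℤ) = (-c) % r := Int.toNat_of_nonneg hw0
    have hwne : w ≠ 0 := by
      intro h0
      apply h
      have : (-c) % r = 0 := by rw [← hwcast, h0]; simp
      exact dvd_neg.mp (Int.dvd_of_emod_eq_zero this)
    have hsub : allowedF r c ⊆ ((range r).erase 0).erase w := by
      intro v hv
      simp only [allowedF, mem_filter] at hv
      refine mem_erase.2 ⟨?_, mem_erase.2 ⟨?_, hv.1⟩⟩
      · rintro rfl
        apply hv.2.2
        have : ((w:ℤ) + c) % r = 0 := by
          rw [hwcast, Int.add_emod, Int.emod_emod_of_dvd _ dvd_rfl, ← Int.add_emod]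
          simp
        exact Int.dvd_of_emod_eq_zero this
      · rintro rfl
        exact hv.2.1 (by simp)
    have hwm : w ∈ (range r).erase 0 := by
      refine mem_erase.2 ⟨hwne, mem_range.2 ?_⟩
      omega
    calc #(allowedF r c) ≤ #(((range r).erase 0).erase w) := card_le_card hsub
      _ = r - 1 - 1 := by
          rw [card_erase_of_mem hwm, card_erase_of_mem (by simp [Nat.lt_of_lt_of_le two_pos hr]), card_range]
      _ ≤ r - 2 := by omega


lemma sieve_bound (n : ℕ) (hn : 0 < n) (c : ℤ) :
    #((Finset.Icc (-(n:ℤ)) (n:ℤ)).filter (fun a => Int.gcd a n = 1 ∧ Int.gcd (a+c) n = 1)) ≤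
      (2*n / (∏ r ∈ n.primeFactors, r) + 1) * ∏ r ∈ n.primeFactors, #(allowedF r c) := by
  classical
  set P := n.primeFactors with hPdef
  set R := ∏ r ∈ P, r with hRdef
  have hRdvd : R ∣ n := Nat.prod_primeFactors_dvd n
  have hR : 0 < R := Nat.pos_of_dvd_of_pos hRdvd hn
  have hRZ : (0:ℤ) < (R:ℤ) := by exact_mod_cast hR
  set B := 2*n / R + 1 with hBdef
  have hcard : #((range B) ×ˢ (P.pi fun r => allowedF r c)) = B * ∏ r ∈ P, #(allowedF r c) := by
    rw [card_product, card_pi, card_range]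
  rw [← hcard]
  apply card_le_card_of_injOn
    (fun a : ℤ => ((((a + n) / (R:ℤ)).toNat, fun r _ => ((a % (r:ℤ)).toNat)) : ℕ × (∀ r ∈ P, ℕ)))
  · intro a ha
    simp only [mem_coe, mem_filter, mem_Icc] at ha
    obtain ⟨⟨ha1, ha2⟩, hg1, hg2⟩ := ha
    have hnn : (0:ℤ) ≤ a + n := by linarith
    rw [mem_coe, mem_product]
    constructor
    · -- block part
      rw [mem_range]
      have h1 : (a + n) / (R:ℤ) ≤ (2*n : ℤ) / R := Int.ediv_le_ediv hRZ (by push_cast; linarith)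
      have h2 : ((2*n : ℕ):ℤ) / ((R:ℕ):ℤ) = ((2*n/R : ℕ) : ℤ) := (Int.natCast_ediv _ _).symm
      have h3 : (a + n) / (R:ℤ) ≤ ((2*n/R : ℕ) : ℤ) := by
        rw [← h2]; exact_mod_cast h1
      have d1 : (0:ℤ) ≤ (a + n) / (R:ℤ) := Int.ediv_nonneg hnn (le_of_lt hRZ)
      dsimp only
      omega
    · -- residues part
      rw [Finset.mem_pi]
      intro r hr
      have hrp : r.Prime := Nat.prime_of_mem_primeFactors hr
      have hrn : r ∣ n := Nat.dvd_of_mem_primeFactors hr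
      have hr0 : (0:ℤ) < (r:ℤ) := by exact_mod_cast hrp.pos
      have he0 : (0:ℤ) ≤ a % r := Int.emod_nonneg _ (ne_of_gt hr0)
      have helt : a % r < r := Int.emod_lt_of_pos _ hr0
      have hecast : ((a % (r:ℤ)).toNat : ℤ) = a % r := Int.toNat_of_nonneg he0
      have hdvda : ¬ ((r:ℤ) ∣ a) := by
        intro hdvd
        have h1 : r ∣ a.natAbs := by rwa [← Int.natAbs_natCast r, Int.natAbs_dvd_natAbs]
        have : r ∣ Int.gcd a n := Nat.dvd_gcd h1 hrn
        rw [hg1] at this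
        exact hrp.ne_one (Nat.eq_one_of_dvd_one this)
      have hdvdac : ¬ ((r:ℤ) ∣ (a + c)) := by
        intro hdvd
        have h1 : r ∣ (a+c).natAbs := by rwa [← Int.natAbs_natCast r, Int.natAbs_dvd_natAbs]
        have : r ∣ Int.gcd (a+c) n := Nat.dvd_gcd h1 hrn
        rw [hg2] at this
        exact hrp.ne_one (Nat.eq_one_of_dvd_one this)
      simp only [allowedF, mem_filter, mem_range]
      refine ⟨by omega, ?_, ?_⟩
      · rw [hecast]
        intro hd
        have h0 : a % (r:ℤ) = 0 := by
          have hh := Int.emod_emod_of_dvd a (dvd_refl (r:ℤ))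
          rw [← hh]
          exact Int.emod_eq_zero_of_dvd hd
        exact hdvda (Int.dvd_of_emod_eq_zero h0)
      · rw [hecast]
        intro hd
        apply hdvdac
        have h5 : (r:ℤ) ∣ (a + c) - (a % r + c) := by
          refine ⟨a / r, ?_⟩
          have hh := Int.mul_ediv_add_emod a (r:ℤ)
          linarith
        have h6 := dvd_add h5 hd
        rwa [sub_add_cancel] at h6
  · -- injectivity
    intro a1 h1 a2 h2 heq
    simp only [coe_filter, Set.mem_setOf_eq, mem_Icc] at h1 h2
    obtain ⟨⟨h1a, h1b⟩, _, _⟩ := h1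
    obtain ⟨⟨h2a, h2b⟩, _, _⟩ := h2
    have hblock := congrArg Prod.fst heq
    have hres := congrArg Prod.snd heq
    simp only at hblock hres
    -- residues agree
    have hdvd : ∀ r ∈ P, (r:ℤ) ∣ (a2 - a1) := by
      intro r hr
      have hrp : r.Prime := Nat.prime_of_mem_primeFactors hr
      have hr0 : (0:ℤ) < (r:ℤ) := by exact_mod_cast hrp.pos
      have h := congrFun (congrFun hres r) hr
      have e1 : (0:ℤ) ≤ a1 % r := Int.emod_nonneg _ (ne_of_gt hr0)
      have e2 : (0:ℤ) ≤ a2 % r := Int.emod_nonneg _ (ne_of_gt hr0)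
      have hmm : a1 % r = a2 % r := by omega
      have hmod : a1 ≡ a2 [ZMOD (r:ℤ)] := hmm
      exact hmod.dvd
    have hdvdN : ∀ r ∈ P, r ∣ (a2 - a1).natAbs := by
      intro r hr
      rw [← Int.natAbs_natCast r, Int.natAbs_dvd_natAbs]
      exact hdvd r hr
    have hRdvd2 : R ∣ (a2 - a1).natAbs := by
      rw [hRdef]
      exact Finset.prod_primes_dvd _ (fun r hr => Nat.Prime.prime (Nat.prime_of_mem_primeFactors hr)) hdvdN
    have hRdvdZ : (R:ℤ) ∣ (a2 - a1) := by
      rwa [← Int.natAbs_natCast R, Int.natAbs_dvd_natAbs] at hRdvd2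
    -- blocks agree
    have hnn1 : (0:ℤ) ≤ a1 + n := by linarith
    have hnn2 : (0:ℤ) ≤ a2 + n := by linarith
    have hq1 : (a1 + n) / (R:ℤ) = (a2 + n) / (R:ℤ) := by
      have d1 : (0:ℤ) ≤ (a1 + n) / R := Int.ediv_nonneg hnn1 (le_of_lt hRZ)
      have d2 : (0:ℤ) ≤ (a2 + n) / R := Int.ediv_nonneg hnn2 (le_of_lt hRZ)
      omega
    have hm1 := Int.mul_ediv_add_emod (a1 + n) R
    have hm2 := Int.mul_ediv_add_emod (a2 + n) R
    have hr1 : 0 ≤ (a1 + n) % R := Int.emod_nonneg _ (ne_of_gt hRZ)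
    have hr2 : (a1 + n) % R < R := Int.emod_lt_of_pos _ hRZ
    have hr3 : 0 ≤ (a2 + n) % R := Int.emod_nonneg _ (ne_of_gt hRZ)
    have hr4 : (a2 + n) % R < R := Int.emod_lt_of_pos _ hRZ
    have hmul : (R:ℤ) * ((a1 + n) / R) = (R:ℤ) * ((a2 + n) / R) := by rw [hq1]
    have hdiff : a2 - a1 = (a2 + n) % R - (a1 + n) % R := by
      omega
    have : a2 - a1 = 0 := by
      refine Int.eq_zero_of_abs_lt_dvd hRdvdZ ?_
      rw [abs_lt]
      omega
    omega


lemma prod_boole_dvd {P : Finset ℕ} (hP : ∀ r ∈ P, r.Prime) (t : Finset ℕ) (ht : t ⊆ P) (k : ℕ) :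
    (∏ r ∈ t, if r ∣ k then 1 else 0 : ℕ) = if (∏ r ∈ t, r) ∣ k then 1 else 0 := by
  rw [Finset.prod_boole]
  congr 1
  simp only [eq_iff_iff]
  constructor
  · intro h
    exact Finset.prod_primes_dvd _ (fun r hr => (hP r (ht hr)).prime) h
  · intro h r hr
    exact dvd_trans (Finset.dvd_prod_of_mem _ hr) h

lemma sum_weight (P : Finset ℕ) (hP : ∀ r ∈ P, r.Prime) (K : ℕ) :
    ((∑ k ∈ Ioc 0 K, ∏ r ∈ P, ((r - 2 : ℕ) + if r ∣ k then 1 else 0) : ℕ) : ℚ)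
      ≤ K * ∏ r ∈ P, ((r:ℚ) - 1)^2 / r := by
  classical
  have hexp : ∀ k, (∏ r ∈ P, ((r - 2 : ℕ) + if r ∣ k then 1 else 0) : ℕ)
      = ∑ t ∈ P.powerset, (if (∏ r ∈ t, r) ∣ k then 1 else 0) * ∏ r ∈ P \ t, (r - 2) := by
    intro k
    have h1 : (∏ r ∈ P, ((r - 2 : ℕ) + if r ∣ k then 1 else 0))
        = ∏ r ∈ P, ((if r ∣ k then 1 else 0) + (r - 2 : ℕ)) :=
      Finset.prod_congr rfl (fun r _ => by ring)
    rw [h1, Finset.prod_add]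
    apply Finset.sum_congr rfl
    intro t ht
    rw [prod_boole_dvd hP t (Finset.mem_powerset.mp ht)]
  have hN : (∑ k ∈ Ioc 0 K, ∏ r ∈ P, ((r - 2 : ℕ) + if r ∣ k then 1 else 0) : ℕ)
      = ∑ t ∈ P.powerset, (K / ∏ r ∈ t, r) * ∏ r ∈ P \ t, (r - 2) := by
    rw [Finset.sum_congr rfl (fun k _ => hexp k), Finset.sum_comm]
    apply Finset.sum_congr rfl
    intro t ht
    rw [← Finset.sum_mul]
    congr 1
    rw [Finset.sum_boole, ← Nat.Ioc_filter_dvd_card_eq_div]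
    simp
  calc ((∑ k ∈ Ioc 0 K, ∏ r ∈ P, ((r - 2 : ℕ) + if r ∣ k then 1 else 0) : ℕ) : ℚ)
      = ∑ t ∈ P.powerset, ((K / ∏ r ∈ t, r : ℕ) : ℚ) * ∏ r ∈ P \ t, ((r:ℚ) - 2) := by
        rw [hN, Nat.cast_sum]
        apply Finset.sum_congr rfl
        intro t ht
        rw [Nat.cast_mul, Nat.cast_prod]
        congr 1
        apply Finset.prod_congr rfl
        intro r hr
        have h2 : 2 ≤ r := (hP r (Finset.mem_sdiff.mp hr).1).two_le
        have : ((r - 2 : ℕ) : ℚ) = (r:ℚ) - 2 := by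
          push_cast [Nat.cast_sub h2]; ring
        rw [this]
    _ ≤ ∑ t ∈ P.powerset, ((K : ℚ) / (∏ r ∈ t, (r:ℚ))) * ∏ r ∈ P \ t, ((r:ℚ) - 2) := by
        apply Finset.sum_le_sum
        intro t htm
        have h2 : ∀ r ∈ P \ t, (0:ℚ) ≤ (r:ℚ) - 2 := by
          intro r hr
          have h3 := (hP r (Finset.mem_sdiff.mp hr).1).two_le
          have h4 : (2:ℚ) ≤ r := by exact_mod_cast h3
          linarith
        refine mul_le_mul_of_nonneg_right ?_ (Finset.prod_nonneg h2)
        rw [← Nat.cast_prod]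
        exact Nat.cast_div_le
    _ = (K:ℚ) * ∑ t ∈ P.powerset, (∏ r ∈ t, (1/(r:ℚ))) * ∏ r ∈ P \ t, ((r:ℚ) - 2) := by
        rw [Finset.mul_sum]
        apply Finset.sum_congr rfl
        intro t htm
        have hne : (∏ r ∈ t, (r:ℚ)) ≠ 0 := by
          apply Finset.prod_ne_zero_iff.mpr
          intro r hr
          have := (hP r (Finset.mem_powerset.mp htm hr)).pos
          positivity
        simp only [one_div, Finset.prod_inv_distrib]
        field_simp
    _ = (K:ℚ) * ∏ r ∈ P, ((1/(r:ℚ)) + ((r:ℚ) - 2)) := by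
        rw [Finset.prod_add]
    _ ≤ K * ∏ r ∈ P, ((r:ℚ) - 1)^2 / r := by
        apply mul_le_mul_of_nonneg_left _ (Nat.cast_nonneg K)
        apply le_of_eq
        apply Finset.prod_congr rfl
        intro r hr
        have hr2 : (2:ℚ) ≤ r := by exact_mod_cast (hP r hr).two_le
        have hr0 : (r:ℚ) ≠ 0 := by linarith
        field_simp
        ring


def Acop (n : ℕ) : Finset ℤ := (Finset.Icc (-(n:ℤ)) (n:ℤ)).filter (fun a => Int.gcd a n = 1)

lemma le_card_Acop {n : ℕ} (h2 : 2 ≤ n) : 2 * n.totient ≤ #(Acop n) := by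
  classical
  set T : Finset ℕ := (range n).filter n.Coprime with hT
  have hTcard : #T = n.totient := (Nat.totient_eq_card_coprime n).symm
  have hmem : ∀ a ∈ T, a < n ∧ Int.gcd (a:ℤ) (n:ℤ) = 1 := by
    intro a ha
    rw [hT, Finset.mem_filter, Finset.mem_range] at ha
    refine ⟨ha.1, ?_⟩
    rw [Int.gcd_natCast_natCast]
    exact Nat.coprime_comm.mp ha.2
  have hsub1 : T.image (fun a : ℕ => (a:ℤ)) ⊆ Acop n := by
    intro x hx
    obtain ⟨a, ha, rfl⟩ := Finset.mem_image.mp hx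
    obtain ⟨h1, hg⟩ := hmem a ha
    refine Finset.mem_filter.mpr ⟨Finset.mem_Icc.mpr ⟨?_, by exact_mod_cast h1.le⟩, hg⟩
    have ha0 : (0:ℤ) ≤ (a:ℤ) := Int.natCast_nonneg a
    have hn0 : (0:ℤ) ≤ (n:ℤ) := Int.natCast_nonneg n
    linarith
  have hsub2 : T.image (fun a : ℕ => (a:ℤ) - n) ⊆ Acop n := by
    intro x hx
    obtain ⟨a, ha, rfl⟩ := Finset.mem_image.mp hx
    obtain ⟨h1, hg⟩ := hmem a ha
    refine Finset.mem_filter.mpr ⟨Finset.mem_Icc.mpr ⟨?_, ?_⟩, ?_⟩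
    · have : (0:ℤ) ≤ a := by positivity
      linarith
    · have : (a:ℤ) ≤ n := by exact_mod_cast h1.le
      have : (0:ℤ) < n := by positivity
      linarith
    · have hco : IsCoprime (a:ℤ) (n:ℤ) := Int.isCoprime_iff_gcd_eq_one.mpr hg
      have hco2 := hco.add_mul_left_left (-1)
      have : (a:ℤ) + (n:ℤ) * (-1) = (a:ℤ) - n := by ring
      rw [this] at hco2
      exact Int.isCoprime_iff_gcd_eq_one.mp hco2
  have hdisj : Disjoint (T.image (fun a : ℕ => (a:ℤ))) (T.image (fun a : ℕ => (a:ℤ) - n)) := by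
    rw [Finset.disjoint_left]
    intro x hx1 hx2
    obtain ⟨a, _, rfl⟩ := Finset.mem_image.mp hx1
    obtain ⟨b, hb, heq⟩ := Finset.mem_image.mp hx2
    have hbn : b < n := ((Finset.mem_filter.mp hb).1 |> Finset.mem_range.mp)
    have : (b:ℤ) - n < 0 := by
      have : (b:ℤ) < n := by exact_mod_cast hbn
      linarith
    have : (0:ℤ) ≤ a := by positivity
    omega
  have hc1 : #(T.image (fun a : ℕ => (a:ℤ))) = n.totient := by
    rw [Finset.card_image_of_injective _ (fun x y h => by exact_mod_cast h), hTcard]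
  have hc2 : #(T.image (fun a : ℕ => (a:ℤ) - n)) = n.totient := by
    rw [Finset.card_image_of_injective _ (fun x y h => by
      have : (x:ℤ) = y := sub_left_inj.mp h
      exact_mod_cast this), hTcard]
  calc 2 * n.totient = #(T.image (fun a : ℕ => (a:ℤ))) + #(T.image (fun a : ℕ => (a:ℤ) - n)) := by
        rw [hc1, hc2]; ring
    _ = #((T.image (fun a : ℕ => (a:ℤ))) ∪ (T.image (fun a : ℕ => (a:ℤ) - n))) :=
        (Finset.card_union_of_disjoint hdisj).symm
    _ ≤ #(Acop n) := Finset.card_le_card (Finset.union_subset hsub1 hsub2)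


set_option maxHeartbeats 2000000 in
theorem key_count (n q : ℕ) (h2 : 2 ≤ n) (hq : 12 * n.totient < q) (hcop : Nat.Coprime q n) :
    n.totient ≤ #((Acop n).image (fun a : ℤ => ((a : ZMod q)))) := by
  classical
  have hn0 : 0 < n := by omega
  have hφ : 0 < n.totient := Nat.totient_pos.mpr hn0
  have hq0 : 0 < q := by omega
  haveI : NeZero q := ⟨by omega⟩
  set φ := n.totient with hφdef
  set P := n.primeFactors with hPdef
  have hPprime : ∀ r ∈ P, r.Prime := fun r hr => Nat.prime_of_mem_primeFactors hr
  set R := ∏ r ∈ P, r with hRdef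
  have hRdvd : R ∣ n := Nat.prod_primeFactors_dvd n
  have hR0 : 0 < R := Nat.pos_of_dvd_of_pos hRdvd hn0
  have hRn : R ≤ n := Nat.le_of_dvd hn0 hRdvd
  set A := Acop n with hAdef
  set S := A.image (fun a : ℤ => ((a : ZMod q))) with hSdef
  set c : ZMod q → ℕ := fun r => #(A.filter (fun a : ℤ => (a : ZMod q) = r)) with hcdef
  set K := 2*n/q with hKdef
  set B := 2*n/R + 1 with hBdef
  set W : ℕ → ℕ := fun m => ∏ r ∈ P, ((r - 2 : ℕ) + if r ∣ m then 1 else 0) with hWdef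
  set T := ∑ a ∈ A, #(A.filter (fun b : ℤ => b ≠ a ∧ (b : ZMod q) = (a : ZMod q))) with hTdef
  have hA : 2 * φ ≤ #A := le_card_Acop h2
  -- Step 1: second moment identities
  have hsum : ∑ r ∈ S, c r = #A := by
    simp only [hSdef, hcdef]
    exact (Finset.card_eq_sum_card_image (fun a : ℤ => (a : ZMod q)) A).symm
  have hcomp : ∑ a ∈ A, c ((a : ZMod q)) = ∑ r ∈ S, c r * c r := by
    rw [Finset.sum_comp (fun r => c r) (fun a : ℤ => (a : ZMod q))]
    apply Finset.sum_congr rfl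
    intro r _
    rw [smul_eq_mul]
  have hdiag : ∑ a ∈ A, c ((a : ZMod q)) = #A + T := by
    have h1 : ∀ a ∈ A, c ((a : ZMod q))
        = 1 + #(A.filter (fun b : ℤ => b ≠ a ∧ (b : ZMod q) = (a : ZMod q))) := by
      intro a ha
      have hins : A.filter (fun b : ℤ => (b : ZMod q) = (a : ZMod q))
          = insert a (A.filter (fun b : ℤ => b ≠ a ∧ (b : ZMod q) = (a : ZMod q))) := by
        ext b
        simp only [Finset.mem_filter, Finset.mem_insert]
        constructor
        · rintro ⟨hbA, hbe⟩
          by_cases hba : b = a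
          · exact Or.inl hba
          · exact Or.inr ⟨hbA, hba, hbe⟩
        · rintro (rfl | ⟨hbA, hba, hbe⟩)
          · exact ⟨ha, rfl⟩
          · exact ⟨hbA, hbe⟩
      have hnm : a ∉ A.filter (fun b : ℤ => b ≠ a ∧ (b : ZMod q) = (a : ZMod q)) := by
        simp
      simp only [hcdef]
      rw [hins, Finset.card_insert_of_notMem hnm]
      omega
    rw [Finset.sum_congr rfl h1, Finset.sum_add_distrib]
    congr 1
    · simp
  -- Step 2: bound T by a sum over shifts
  have hTsigma : T ≤ ∑ k ∈ (Finset.Icc (-(K:ℤ)) (K:ℤ)).erase 0,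
      #(A.filter (fun a : ℤ => a + k*(q:ℤ) ∈ A)) := by
    rw [hTdef, ← Finset.card_sigma, ← Finset.card_sigma]
    apply Finset.card_le_card_of_injOn (fun x => ⟨(x.2 - x.1)/(q:ℤ), x.1⟩)
    · rintro ⟨a, b⟩ hx
      dsimp only
      rw [Finset.mem_coe, Finset.mem_sigma] at hx
      obtain ⟨haA, hbf⟩ := hx
      rw [Finset.mem_filter] at hbf
      obtain ⟨hbA, hba, hbe⟩ := hbf
      have hdvd : (q:ℤ) ∣ b - a := by
        have h := (ZMod.intCast_eq_intCast_iff b a q).mp hbe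
        exact (dvd_sub_comm).mp h.dvd
      have hkq : ((b - a)/(q:ℤ)) * q = b - a := Int.ediv_mul_cancel hdvd
      have hIcc : ∀ x ∈ A, -(n:ℤ) ≤ x ∧ x ≤ n := by
        intro x hxA
        rw [hAdef, Acop, Finset.mem_filter, Finset.mem_Icc] at hxA
        exact hxA.1
      obtain ⟨ha1, ha2⟩ := hIcc a haA
      obtain ⟨hb1, hb2⟩ := hIcc b hbA
      have habs : (b - a).natAbs ≤ 2*n := by omega
      have hkabs : ((b - a)/(q:ℤ)).natAbs ≤ K := by
        have h1 : ((b - a)/(q:ℤ)).natAbs * q = (b - a).natAbs := by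
          rw [← Int.natAbs_natCast q, ← Int.natAbs_mul, Int.natAbs_natCast, hkq]
        rw [hKdef, Nat.le_div_iff_mul_le hq0, h1]
        exact habs
      rw [Finset.mem_coe, Finset.mem_sigma]
      dsimp only
      constructor
      · rw [Finset.mem_erase, Finset.mem_Icc]
        refine ⟨?_, by omega, by omega⟩
        intro h0
        rw [h0, zero_mul] at hkq
        have : b = a := by omega
        exact hba this
      · rw [Finset.mem_filter]
        refine ⟨haA, ?_⟩
        have h3 : a + (b - a)/(q:ℤ) * q = b := by rw [hkq]; ring
        rwa [h3]
    · rintro ⟨a, b⟩ hx ⟨a', b'⟩ hy heq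
      simp only [Sigma.mk.inj_iff] at heq
      obtain ⟨hk, haeq⟩ := heq
      have ha' : a = a' := eq_of_heq haeq
      simp only [Finset.mem_coe, Finset.mem_sigma, Finset.mem_filter] at hx hy
      have hdvd1 : (q:ℤ) ∣ b - a := by
        have h := (ZMod.intCast_eq_intCast_iff b a q).mp hx.2.2.2
        exact (dvd_sub_comm).mp h.dvd
      have hdvd2 : (q:ℤ) ∣ b' - a' := by
        have h := (ZMod.intCast_eq_intCast_iff b' a' q).mp hy.2.2.2
        exact (dvd_sub_comm).mp h.dvd
      have e1 : ((b - a)/(q:ℤ)) * q = b - a := Int.ediv_mul_cancel hdvd1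
      have e2 : ((b' - a')/(q:ℤ)) * q = b' - a' := Int.ediv_mul_cancel hdvd2
      have hb' : b = b' := by
        rw [ha'] at e1 hk
        rw [hk] at e1
        omega
      cases ha'
      cases hb'
      rfl
  -- Step 3: sieve bound for each shift
  have hNk : ∀ k : ℤ, k ≠ 0 → #(A.filter (fun a : ℤ => a + k*(q:ℤ) ∈ A)) ≤ B * W k.natAbs := by
    intro k hk
    have hsub : A.filter (fun a : ℤ => a + k*(q:ℤ) ∈ A) ⊆
        (Finset.Icc (-(n:ℤ)) (n:ℤ)).filter
          (fun a => Int.gcd a n = 1 ∧ Int.gcd (a + k*(q:ℤ)) n = 1) := by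
      intro a ha
      rw [Finset.mem_filter] at ha
      obtain ⟨haA, hshift⟩ := ha
      rw [hAdef, Acop, Finset.mem_filter] at haA hshift
      exact Finset.mem_filter.mpr ⟨haA.1, haA.2, hshift.2⟩
    refine le_trans (Finset.card_le_card hsub) (le_trans (sieve_bound n hn0 (k*(q:ℤ))) ?_)
    rw [← hPdef, ← hRdef, ← hBdef]
    apply Nat.mul_le_mul_left
    rw [hWdef]
    apply Finset.prod_le_prod'
    intro r hr
    have hrp : r.Prime := hPprime r hr
    refine le_trans (card_allowedF hrp.two_le _) ?_
    apply Nat.add_le_add_left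
    by_cases hd : (r:ℤ) ∣ k*(q:ℤ)
    · have hrq : ¬ ((r:ℤ) ∣ (q:ℤ)) := by
        rw [Int.natCast_dvd_natCast]
        intro hrq
        have : r ∣ Nat.gcd q n := Nat.dvd_gcd hrq (Nat.dvd_of_mem_primeFactors (hPdef ▸ hr))
        rw [hcop] at this
        exact hrp.ne_one (Nat.eq_one_of_dvd_one this)
      have hrk : (r:ℤ) ∣ k := by
        rcases (Int.Prime.dvd_mul' hrp hd) with h | h
        · exact h
        · exact absurd h hrq
      have : r ∣ k.natAbs := by
        rwa [← Int.natAbs_natCast r, Int.natAbs_dvd_natAbs]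
      simp [hd, this]
    · simp [hd]
  -- Step 4: fold the shifts
  have hstep4 : ∑ k ∈ (Finset.Icc (-(K:ℤ)) (K:ℤ)).erase 0,
      #(A.filter (fun a : ℤ => a + k*(q:ℤ) ∈ A)) ≤ B * (2 * ∑ m ∈ Ioc 0 K, W m) := by
    have h1 : ∑ k ∈ (Finset.Icc (-(K:ℤ)) (K:ℤ)).erase 0,
        #(A.filter (fun a : ℤ => a + k*(q:ℤ) ∈ A))
        ≤ ∑ k ∈ (Finset.Icc (-(K:ℤ)) (K:ℤ)).erase 0, B * W k.natAbs := by
      apply Finset.sum_le_sum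
      intro k hk
      exact hNk k (Finset.ne_of_mem_erase hk)
    refine le_trans h1 ?_
    rw [← Finset.mul_sum]
    apply Nat.mul_le_mul_left
    -- ∑ over k of W |k| ≤ 2 * ∑ over positive m of W m
    rw [Finset.sum_comp (fun m => W m) (fun k : ℤ => k.natAbs)]
    have himg : (((Finset.Icc (-(K:ℤ)) (K:ℤ)).erase 0).image (fun k : ℤ => k.natAbs)) ⊆ Ioc 0 K := by
      intro m hm
      rw [Finset.mem_image] at hm
      obtain ⟨k, hk, rfl⟩ := hm
      rw [Finset.mem_erase, Finset.mem_Icc] at hk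
      rw [Finset.mem_Ioc]
      omega
    calc ∑ m ∈ ((Finset.Icc (-(K:ℤ)) (K:ℤ)).erase 0).image (fun k : ℤ => k.natAbs),
          #((((Finset.Icc (-(K:ℤ)) (K:ℤ)).erase 0)).filter (fun k : ℤ => k.natAbs = m)) • W m
        ≤ ∑ m ∈ ((Finset.Icc (-(K:ℤ)) (K:ℤ)).erase 0).image (fun k : ℤ => k.natAbs), 2 * W m := by
          apply Finset.sum_le_sum
          intro m hm
          have hfib : ((Finset.Icc (-(K:ℤ)) (K:ℤ)).erase 0).filter (fun k : ℤ => k.natAbs = m)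
              ⊆ {(m:ℤ), -(m:ℤ)} := by
            intro k hk
            rw [Finset.mem_filter] at hk
            rw [Finset.mem_insert, Finset.mem_singleton]
            omega
          have hc2 : #(((Finset.Icc (-(K:ℤ)) (K:ℤ)).erase 0).filter (fun k : ℤ => k.natAbs = m)) ≤ 2 :=
            le_trans (Finset.card_le_card hfib) (le_trans (Finset.card_insert_le _ _) (by simp))
          rw [smul_eq_mul]
          exact Nat.mul_le_mul_right _ hc2
      _ ≤ ∑ m ∈ Ioc 0 K, 2 * W m := Finset.sum_le_sum_of_subset himg
      _ = 2 * ∑ m ∈ Ioc 0 K, W m := by rw [Finset.mul_sum]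
  -- Step 5: numeric bound for T
  have hq0' : (0:ℚ) < q := by exact_mod_cast hq0
  have hn0' : (0:ℚ) < n := by exact_mod_cast hn0
  have hR0' : (0:ℚ) < R := by exact_mod_cast hR0
  have hφQ : (0:ℚ) < φ := by exact_mod_cast hφ
  have hWsum : ((∑ m ∈ Ioc 0 K, W m : ℕ) : ℚ) ≤ (K:ℚ) * ∏ r ∈ P, ((r:ℚ) - 1)^2 / r := by
    simpa [hWdef] using sum_weight P hPprime K
  have hTB : (T:ℚ) ≤ (B:ℚ) * (2 * ((∑ m ∈ Ioc 0 K, W m : ℕ) : ℚ)) := by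
    exact_mod_cast le_trans hTsigma hstep4
  have hprod1 : ∏ r ∈ P, (1 - (r:ℚ)⁻¹) = (φ:ℚ)/n := by
    rw [hφdef, Nat.totient_eq_mul_prod_factors n, ← hPdef]
    rw [mul_comm, mul_div_assoc, div_self (ne_of_gt hn0'), mul_one]
  have hRQ : (∏ r ∈ P, (r:ℚ)) = (R:ℚ) := by rw [hRdef]; push_cast; rfl
  have hprodR : ∏ r ∈ P, ((r:ℚ) - 1) = (R:ℚ) * ((φ:ℚ)/n) := by
    rw [← hprod1, ← hRQ, ← Finset.prod_mul_distrib]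
    apply Finset.prod_congr rfl
    intro r hr
    have h0 : (r:ℚ) ≠ 0 := by
      have := (hPprime r hr).pos
      positivity
    field_simp
  have hprodFinal : ∏ r ∈ P, ((r:ℚ)-1)^2/r = (R:ℚ) * ((φ:ℚ)/n)^2 := by
    rw [Finset.prod_div_distrib, Finset.prod_pow, hprodR, hRQ]
    field_simp
  have hBq : (B:ℚ) ≤ 3*(n:ℚ)/(R:ℚ) := by
    have h1 : ((2*n/R : ℕ):ℚ) ≤ 2*(n:ℚ)/R := by
      calc ((2*n/R : ℕ):ℚ) ≤ ((2*n : ℕ):ℚ)/(R:ℚ) := Nat.cast_div_le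
        _ = 2*(n:ℚ)/R := by push_cast; ring
    have h2 : (1:ℚ) ≤ (n:ℚ)/R := by
      rw [le_div_iff₀ hR0']
      have : (R:ℚ) ≤ n := by exact_mod_cast hRn
      linarith
    have h3 : (B:ℚ) = ((2*n/R : ℕ):ℚ) + 1 := by rw [hBdef]; push_cast; ring
    have h4 : 3*(n:ℚ)/R = 2*(n:ℚ)/R + (n:ℚ)/R := by ring
    rw [h3, h4]
    linarith
  have hKq : (K:ℚ) ≤ 2*(n:ℚ)/(q:ℚ) := by
    calc (K:ℚ) = ((2*n/q : ℕ):ℚ) := by rw [hKdef]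
      _ ≤ ((2*n : ℕ):ℚ)/(q:ℚ) := Nat.cast_div_le
      _ = 2*(n:ℚ)/q := by push_cast; ring
  have hWsum2 : ((∑ m ∈ Ioc 0 K, W m : ℕ):ℚ) ≤ (2*(n:ℚ)/q) * ((R:ℚ) * ((φ:ℚ)/n)^2) := by
    refine le_trans hWsum ?_
    rw [hprodFinal]
    apply mul_le_mul_of_nonneg_right hKq (by positivity)
  have hTq : (T:ℚ) < φ := by
    have hchain : (T:ℚ) ≤ (3*(n:ℚ)/R) * (2 * ((2*(n:ℚ)/q) * ((R:ℚ) * ((φ:ℚ)/n)^2))) := by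
      refine le_trans hTB ?_
      apply mul_le_mul hBq (by linarith) (by positivity) (by positivity)
    have heqn : (3*(n:ℚ)/R) * (2 * ((2*(n:ℚ)/q) * ((R:ℚ) * ((φ:ℚ)/n)^2))) = 12 * (φ:ℚ)^2 / q := by
      field_simp
      ring
    rw [heqn] at hchain
    refine lt_of_le_of_lt hchain ?_
    rw [div_lt_iff₀ hq0']
    have hqQ : 12*(φ:ℚ) < q := by exact_mod_cast hq
    nlinarith
  have hTnat : T ≤ φ := by
    have : T < φ := by exact_mod_cast hTq
    omega
  -- Step 6: Cauchy-Schwarz conclusion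
  by_contra hcon
  push_neg at hcon
  have hSφ : #S + 1 ≤ φ := hcon
  have h2' : ∑ r ∈ S, (c r:ℚ) = (#A:ℚ) := by exact_mod_cast hsum
  have h3' : ∑ r ∈ S, (c r:ℚ)^2 = ((#A : ℚ) + T) := by
    have h4 : ∑ r ∈ S, c r * c r = #A + T := hcomp.symm.trans hdiag
    simp only [sq]
    exact_mod_cast h4
  have hCS : ((#A : ℚ))^2 ≤ (#S : ℚ) * ((#A : ℚ) + T) := by
    have h1 := sq_sum_le_card_mul_sum_sq (s := S) (f := fun r => (c r : ℚ))
    rw [h2', h3'] at h1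
    exact_mod_cast h1
  have hAQ : (2*(φ:ℚ)) ≤ (#A:ℚ) := by exact_mod_cast hA
  have hTQ' : (T:ℚ) ≤ (φ:ℚ) := by exact_mod_cast hTnat
  have hSQ : (#S:ℚ) + 1 ≤ (φ:ℚ) := by exact_mod_cast hSφ
  nlinarith [hCS, hAQ, hTQ', hSQ, hφQ, sq_nonneg ((#A:ℚ) - 2*(φ:ℚ)),
    mul_nonneg (sub_nonneg.2 hAQ) (le_of_lt hφQ)]


variable {p : ℕ} [Fact p.Prime]

lemma fiber_eq_ball (j : ℕ) (x : ℤ_[p]) (s : ZMod (p^j)) (c : ℤ_[p]) (hc : PadicInt.toZModPow j c = s) :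
    PadicInt.toZModPow j x = s ↔ dist x c ≤ (p:ℝ)^(-(j:ℤ)) := by
  rw [dist_eq_norm, PadicInt.norm_le_pow_iff_mem_span_pow, ← PadicInt.ker_toZModPow,
    RingHom.mem_ker, map_sub, hc, sub_eq_zero]

lemma fiber_measurable [MeasurableSpace ℤ_[p]] [BorelSpace ℤ_[p]] (j : ℕ) (s : ZMod (p^j)) :
    MeasurableSet ((PadicInt.toZModPow (p := p) j) ⁻¹' {s}) := by
  haveI : NeZero (p^j) := ⟨pow_ne_zero j (Fact.out (p := p.Prime)).ne_zero⟩
  have hc : PadicInt.toZModPow (p := p) j (((s.val : ℕ) : ℤ_[p])) = s := by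
    rw [map_natCast]
    exact ZMod.natCast_rightInverse s
  have : (PadicInt.toZModPow (p := p) j) ⁻¹' {s}
      = Metric.closedBall (((s.val : ℕ) : ℤ_[p])) ((p:ℝ)^(-(j:ℤ))) := by
    ext x
    simp only [Set.mem_preimage, Set.mem_singleton_iff, Metric.mem_closedBall]
    exact fiber_eq_ball j x s _ hc
  rw [this]
  exact measurableSet_closedBall

lemma fiber_measure [MeasurableSpace ℤ_[p]] [BorelSpace ℤ_[p]] (μ : Measure ℤ_[p])
    [μ.IsAddHaarMeasure] [IsProbabilityMeasure μ] (j : ℕ) (s : ZMod (p^j)) :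
    μ ((PadicInt.toZModPow (p := p) j) ⁻¹' {s}) = ((p^j : ℕ) : ℝ≥0∞)⁻¹ := by
  haveI : NeZero (p^j) := ⟨pow_ne_zero j (Fact.out (p := p.Prime)).ne_zero⟩
  -- all fibers have equal measure
  have htrans : ∀ s' : ZMod (p^j), μ ((PadicInt.toZModPow (p := p) j) ⁻¹' {s'})
      = μ ((PadicInt.toZModPow (p := p) j) ⁻¹' {0}) := by
    intro s'
    set c : ℤ_[p] := ((s'.val : ℕ) : ℤ_[p]) with hcdef
    have hc : PadicInt.toZModPow (p := p) j c = s' := by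
      rw [hcdef, map_natCast]
      exact ZMod.natCast_rightInverse s'
    have hpre : (fun x => c + x) ⁻¹' ((PadicInt.toZModPow (p := p) j) ⁻¹' {s'})
        = (PadicInt.toZModPow (p := p) j) ⁻¹' {0} := by
      ext x
      simp only [Set.mem_preimage, Set.mem_singleton_iff, map_add, hc]
      constructor
      · intro h
        have := congrArg (fun y => y - s') h
        simpa [add_comm, add_sub_cancel] using this
      · intro h
        rw [h, add_zero]
    rw [← hpre, measure_preimage_add]
  have hsum : ∑ s' : ZMod (p^j), μ ((PadicInt.toZModPow (p := p) j) ⁻¹' {s'}) = 1 := by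
    rw [← tsum_fintype (L := SummationFilter.unconditional _), ← measure_iUnion _ (fun s' => fiber_measurable j s')]
    · have hU : (⋃ s' : ZMod (p^j), (PadicInt.toZModPow (p := p) j) ⁻¹' {s'}) = Set.univ := by
        ext x
        simp only [Set.mem_iUnion, Set.mem_preimage, Set.mem_singleton_iff, Set.mem_univ, iff_true]
        exact ⟨_, rfl⟩
      rw [hU]
      exact measure_univ
    · intro s1 s2 hne
      apply Set.disjoint_left.mpr
      intro x hx1 hx2
      simp only [Set.mem_preimage, Set.mem_singleton_iff] at hx1 hx2
      exact hne (hx1 ▸ hx2 ▸ rfl)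
  rw [htrans s]
  have hcard : (Fintype.card (ZMod (p^j)) : ℝ≥0∞) * μ ((PadicInt.toZModPow (p := p) j) ⁻¹' {0}) = 1 := by
    rw [← hsum, Finset.sum_congr rfl (fun s' _ => htrans s')]
    simp [mul_comm]
  rw [ZMod.card (p^j)] at hcard
  have hne : ((p^j : ℕ) : ℝ≥0∞) ≠ 0 := by
    simp [pow_ne_zero, (Fact.out (p := p.Prime)).ne_zero]
  have hnetop : ((p^j : ℕ) : ℝ≥0∞) ≠ ⊤ := ENNReal.natCast_ne_top _
  calc μ ((PadicInt.toZModPow (p := p) j) ⁻¹' {0})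
      = ((p^j : ℕ) : ℝ≥0∞)⁻¹ * (((p^j : ℕ) : ℝ≥0∞) * μ ((PadicInt.toZModPow (p := p) j) ⁻¹' {0})) := by
        rw [← mul_assoc, ENNReal.inv_mul_cancel hne hnetop, one_mul]
    _ = ((p^j : ℕ) : ℝ≥0∞)⁻¹ := by rw [hcard, mul_one]


set_option maxHeartbeats 1000000 in
/-- **Lemma 4, first part (Haynes).** Suppose `ψ` takes values in
`{0} ∪ {p^(-j) : j ∈ ℕ}`.  If `p ∤ n` and `1/n ≤ ψ(n) < 1/(12·φ(n))`, then
`μ_p(E_n(ψ)) ≥ φ(n)·ψ(n)`. -/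
theorem stmt14 (p : ℕ) [Fact p.Prime] [MeasurableSpace ℤ_[p]] [BorelSpace ℤ_[p]]
    (μ : Measure ℤ_[p]) [μ.IsAddHaarMeasure] [IsProbabilityMeasure μ]
    (ψ : ℕ → ℝ) (hψ : ∀ n, 0 ≤ ψ n)
    (hval : ∀ n : ℕ, ψ n = 0 ∨ ∃ j : ℕ, ψ n = ((p : ℝ) ^ j)⁻¹)
    (n : ℕ) (hn : ¬ p ∣ n) (hlow : 1 / (n : ℝ) ≤ ψ n)
    (hup : ψ n < 1 / (12 * (Nat.totient n : ℝ))) :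
    ENNReal.ofReal ((Nat.totient n : ℝ) * ψ n) ≤ μ (padicE p ψ n) := by
  classical
  have hp : p.Prime := Fact.out
  -- basic positivity facts
  have hn0 : n ≠ 0 := by
    rintro rfl
    rw [Nat.totient_zero] at hup
    norm_num at hup
    exact absurd hup (not_lt.mpr (hψ 0))
  have hnpos : 0 < n := Nat.pos_of_ne_zero hn0
  have hφ : 0 < n.totient := Nat.totient_pos.mpr hnpos
  have hφR : (0:ℝ) < (n.totient : ℝ) := by exact_mod_cast hφ
  have hψpos : 0 < ψ n := by
    have h1 : (0:ℝ) < 1 / n := by positivity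
    linarith
  obtain ⟨j, hj⟩ : ∃ j : ℕ, ψ n = ((p : ℝ) ^ j)⁻¹ := by
    rcases hval n with h0 | h
    · rw [h0] at hψpos; exact absurd hψpos (lt_irrefl 0)
    · exact h
  have hpR : (0:ℝ) < (p:ℝ) := by exact_mod_cast hp.pos
  have hqR : (0:ℝ) < (p:ℝ)^j := by positivity
  have h2 : 2 ≤ n := by
    by_contra hc
    push_neg at hc
    interval_cases n
    rw [Nat.totient_one] at hup
    norm_num at hup hlow
    linarith
  -- 12 φ(n) < p^j
  have hq12 : 12 * n.totient < p^j := by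
    have h1 : ((p:ℝ)^j)⁻¹ < 1/(12 * (n.totient:ℝ)) := by rw [← hj]; exact hup
    have h2' : 12 * (n.totient:ℝ) < (p:ℝ)^j := by
      rw [one_div] at h1
      have h3 : (0:ℝ) < 12 * (n.totient:ℝ) := by positivity
      exact (inv_lt_inv₀ hqR h3).mp h1  -- check direction
    have : (12 * n.totient : ℕ) < ((p^j : ℕ)) := by
      have : ((12 * n.totient : ℕ) : ℝ) < ((p^j : ℕ) : ℝ) := by push_cast; linarith
      exact_mod_cast this
    exact this
  set q := p^j with hqdef
  have hq0 : 0 < q := pow_pos hp.pos j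
  haveI : NeZero q := ⟨by omega⟩
  have hcopPn : Nat.Coprime p n := (Nat.Prime.coprime_iff_not_dvd hp).mpr hn
  have hcop : Nat.Coprime q n := Nat.Coprime.pow_left j hcopPn
  have hcount := key_count n q h2 hq12 hcop
  -- the image set and its translate by the inverse unit of n
  set u : (ZMod q)ˣ := ZMod.unitOfCoprime n hcop.symm with hudef
  have hnu : ((n : ZMod q)) = (u : ZMod q) := (ZMod.coe_unitOfCoprime n hcop.symm).symm
  set S0 : Finset (ZMod q) := (Acop n).image (fun a : ℤ => ((a : ZMod q))) with hS0def
  set S1 : Finset (ZMod q) := S0.image (fun s => s * ((u⁻¹ : (ZMod q)ˣ) : ZMod q)) with hS1def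
  have hS1card : #S1 = #S0 := by
    rw [hS1def]
    apply Finset.card_image_of_injective
    intro x y hxy
    have h := congrArg (fun z => z * (u : ZMod q)) hxy
    simpa [Units.inv_mul_cancel_right] using h
  -- each fiber over S1 is inside padicE
  have hsub : (⋃ s ∈ S1, (PadicInt.toZModPow (p := p) j) ⁻¹' {s}) ⊆ padicE p ψ n := by
    intro x hx
    simp only [Set.mem_iUnion, Set.mem_preimage, Set.mem_singleton_iff] at hx
    obtain ⟨s, hsS1, hxs⟩ := hx
    rw [hS1def, Finset.mem_image] at hsS1
    obtain ⟨s0, hs0, rfl⟩ := hsS1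
    rw [hS0def, Finset.mem_image] at hs0
    obtain ⟨a, haA, rfl⟩ := hs0
    rw [Acop, Finset.mem_filter, Finset.mem_Icc] at haA
    obtain ⟨⟨ha1, ha2⟩, hgcd⟩ := haA
    refine ⟨a, by rw [abs_le]; exact ⟨ha1, ha2⟩, hgcd, ?_⟩
    -- the norm estimate
    have hker : PadicInt.toZModPow (p := p) j ((n : ℤ_[p]) * x - (a : ℤ_[p])) = 0 := by
      rw [map_sub, map_mul, map_natCast, map_intCast, hxs, hnu]
      have : (u : ZMod q) * ((a : ZMod q) * ((u⁻¹ : (ZMod q)ˣ) : ZMod q)) = (a : ZMod q) := by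
        have h5 : (a : ZMod q) * (u : ZMod q) * ((u⁻¹ : (ZMod q)ˣ) : ZMod q) = (a : ZMod q) :=
          Units.mul_inv_cancel_right _ u
        calc (u : ZMod q) * ((a : ZMod q) * ((u⁻¹ : (ZMod q)ˣ) : ZMod q))
            = (a : ZMod q) * (u : ZMod q) * ((u⁻¹ : (ZMod q)ˣ) : ZMod q) := by ring
          _ = (a : ZMod q) := h5
      rw [this, sub_self]
    have hnorm1 : ‖(n : ℤ_[p]) * x - (a : ℤ_[p])‖ ≤ (p:ℝ)^(-(j:ℤ)) := by
      rw [PadicInt.norm_le_pow_iff_mem_span_pow, ← PadicInt.ker_toZModPow, RingHom.mem_ker]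
      exact hker
    have hnQ : ((n : ℚ_[p])) ≠ 0 := by
      exact_mod_cast Nat.cast_ne_zero.mpr hn0
    have hnnorm : ‖(n : ℚ_[p])‖ = 1 := by
      have hle : ‖((n:ℤ) : ℤ_[p])‖ ≤ 1 := PadicInt.norm_le_one _
      have hnlt : ¬ (‖((n:ℤ) : ℤ_[p])‖ < 1) := by
        rw [PadicInt.norm_int_lt_one_iff_dvd]
        exact_mod_cast hn
      have h1 : ‖((n:ℤ) : ℤ_[p])‖ = 1 := le_antisymm hle (not_lt.mp hnlt)
      have h2'' : ((((n:ℤ) : ℤ_[p])) : ℚ_[p]) = ((n : ℚ_[p])) := by push_cast; ring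
      rw [← h2'', PadicInt.padic_norm_e_of_padicInt]
      exact h1
    have hrw : (x : ℚ_[p]) - (a : ℚ_[p]) / (n : ℚ_[p])
        = ((((n : ℤ_[p]) * x - (a : ℤ_[p])) : ℤ_[p]) : ℚ_[p]) / (n : ℚ_[p]) := by
      push_cast
      field_simp
    rw [hrw, norm_div, hnnorm, div_one]
    have : ‖((((n : ℤ_[p]) * x - (a : ℤ_[p])) : ℤ_[p]) : ℚ_[p])‖
        = ‖(n : ℤ_[p]) * x - (a : ℤ_[p])‖ :=
      PadicInt.padic_norm_e_of_padicInt _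
    rw [this, hj]
    calc ‖(n : ℤ_[p]) * x - (a : ℤ_[p])‖ ≤ (p:ℝ)^(-(j:ℤ)) := hnorm1
      _ = ((p:ℝ)^j)⁻¹ := by rw [zpow_neg, zpow_natCast]
  -- compute the measure of the union of fibers
  have hdisj : (↑S1 : Set (ZMod q)).PairwiseDisjoint
      (fun s => (PadicInt.toZModPow (p := p) j) ⁻¹' {s}) := by
    intro s1 _ s2 _ hne
    apply Set.disjoint_left.mpr
    intro x hx1 hx2
    simp only [Set.mem_preimage, Set.mem_singleton_iff] at hx1 hx2
    exact hne (hx1 ▸ hx2 ▸ rfl)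
  have hmeas : μ (⋃ s ∈ S1, (PadicInt.toZModPow (p := p) j) ⁻¹' {s})
      = #S1 * ((q : ℕ) : ℝ≥0∞)⁻¹ := by
    rw [measure_biUnion_finset hdisj (fun s _ => fiber_measurable j s)]
    rw [Finset.sum_congr rfl (fun s _ => fiber_measure μ j s)]
    rw [Finset.sum_const, nsmul_eq_mul]
  -- final chain
  have hofReal : ENNReal.ofReal ((Nat.totient n : ℝ) * ψ n)
      = (n.totient : ℝ≥0∞) * ((q : ℕ) : ℝ≥0∞)⁻¹ := by
    rw [hj, ENNReal.ofReal_mul (le_of_lt hφR)]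
    congr 1
    · exact ENNReal.ofReal_natCast _
    · rw [ENNReal.ofReal_inv_of_pos hqR]
      congr 1
      rw [show ((p:ℝ)^j) = (((p^j : ℕ)) : ℝ) by push_cast; ring]
      exact ENNReal.ofReal_natCast _
  rw [hofReal]
  calc (n.totient : ℝ≥0∞) * ((q : ℕ) : ℝ≥0∞)⁻¹
      ≤ (#S1 : ℝ≥0∞) * ((q : ℕ) : ℝ≥0∞)⁻¹ := by
        apply mul_le_mul_left
        have : n.totient ≤ #S1 := by rw [hS1card]; exact hcount
        exact_mod_cast Nat.cast_le.mpr this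
    _ = μ (⋃ s ∈ S1, (PadicInt.toZModPow (p := p) j) ⁻¹' {s}) := hmeas.symm
    _ ≤ μ (padicE p ψ n) := measure_mono hsub


end HaynesAux
end
end

section
/- Let p be a prime and define ψ : ℕ → ℝ by ψ(n) = p^{−1} if p divides n and ψ(n) = 0 otherwise. Then for every n ∈ ℕ with p | n one has E_n''(ψ) = {x ∈ ℤ_p : |x|_p ≤ p^{−1}}, and consequently μ_p(W_p''(ψ)) = p^{−1}; in particular μ_p(W_p''(ψ)) is neither 0 nor 1. -/
open MeasureTheory Filter
open scoped ENNReal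

noncomputable section

/-- The set `E_n''(ψ) ⊆ ℤ_p`: union over nonzero integers `a` with `|a| ≤ n`,
`gcd(a,n) = 1` of `{x : |x - a/n|_p ≤ ψ(n)} ∪ {x : |x - n/a|_p ≤ ψ(n)}`. -/
def padicE'' (p : ℕ) [Fact p.Prime] (ψ : ℕ → ℝ) (n : ℕ) : Set ℤ_[p] :=
  {x | ∃ a : ℤ, a ≠ 0 ∧ |a| ≤ (n : ℤ) ∧ Int.gcd a n = 1 ∧
    (‖(x : ℚ_[p]) - (a : ℚ_[p]) / (n : ℚ_[p])‖ ≤ ψ n ∨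
      ‖(x : ℚ_[p]) - (n : ℚ_[p]) / (a : ℚ_[p])‖ ≤ ψ n)}

/-- `W_p''(ψ)`: points of `ℤ_p` lying in infinitely many of the sets `E_n''(ψ)`. -/
def padicW'' (p : ℕ) [Fact p.Prime] (ψ : ℕ → ℝ) : Set ℤ_[p] :=
  {x | {n : ℕ | x ∈ padicE'' p ψ n}.Infinite}

variable {p : ℕ} [hp : Fact p.Prime]

lemma aux_norm_nat_le {n : ℕ} (hpn : p ∣ n) : ‖(n : ℚ_[p])‖ ≤ (p : ℝ)⁻¹ := by
  have : ((p : ℤ) ^ 1) ∣ (n : ℤ) := by simpa using Int.natCast_dvd_natCast.mpr hpn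
  have h := (Padic.norm_int_le_pow_iff_dvd (n : ℤ) 1).mpr this
  simpa using h

lemma aux_ball (ψ : ℕ → ℝ) (n : ℕ) (hn : 0 < n) (hpn : p ∣ n) (hψ : ψ n = (p : ℝ)⁻¹) :
    padicE'' p ψ n = {x : ℤ_[p] | ‖x‖ ≤ (p : ℝ)⁻¹} := by
  have hp2 : (2 : ℝ) ≤ p := by exact_mod_cast hp.out.two_le
  have hpinv : (p : ℝ)⁻¹ < 1 := by
    rw [inv_lt_one_iff₀]; right; linarith
  have hnn : ‖(n : ℚ_[p])‖ ≤ (p : ℝ)⁻¹ := aux_norm_nat_le hpn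
  have hn0 : ((n : ℚ_[p])) ≠ 0 := by exact_mod_cast Nat.cast_ne_zero.mpr hn.ne'
  ext x
  simp only [padicE'', Set.mem_setOf_eq, hψ]
  constructor
  · rintro ⟨a, ha0, _, hgcd, h⟩
    have hpa : ¬ ((p : ℤ) ∣ a) := by
      intro hdvd
      have h1 : (p : ℤ) ∣ ((Int.gcd a n : ℕ) : ℤ) :=
        Int.dvd_coe_gcd hdvd (Int.natCast_dvd_natCast.mpr hpn)
      rw [hgcd] at h1
      have h2 : (p : ℤ) = 1 := Int.eq_one_of_dvd_one (by positivity) (by exact_mod_cast h1)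
      exact hp.out.one_lt.ne' (by exact_mod_cast h2)
    have hna : ‖(a : ℚ_[p])‖ = 1 := by
      rcases lt_or_eq_of_le (Padic.norm_int_le_one (p := p) a) with h1 | h1
      · exact absurd ((Padic.norm_intCast_lt_one_iff).mp h1) hpa
      · exact h1
    have hx1 : ‖(x : ℚ_[p])‖ ≤ 1 := by
      rw [PadicInt.padic_norm_e_of_padicInt]; exact x.norm_le_one
    rcases h with h1 | h2
    · exfalso
      have hq : (p : ℝ) ≤ ‖(a : ℚ_[p]) / (n : ℚ_[p])‖ := by
        rw [norm_div, hna]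
        rw [le_div_iff₀ (norm_pos_iff.mpr hn0)]
        calc (p : ℝ) * ‖(n : ℚ_[p])‖ ≤ (p : ℝ) * (p : ℝ)⁻¹ := by
              apply mul_le_mul_of_nonneg_left hnn (by positivity)
          _ = 1 := by field_simp
      have := norm_sub_norm_le ((a : ℚ_[p]) / (n : ℚ_[p])) (x : ℚ_[p])
      rw [norm_sub_rev] at this
      linarith
    · have hq : ‖(n : ℚ_[p]) / (a : ℚ_[p])‖ ≤ (p : ℝ)⁻¹ := by
        rw [norm_div, hna, div_one]; exact hnn
      have : (x : ℚ_[p]) = ((x : ℚ_[p]) - (n : ℚ_[p]) / (a : ℚ_[p])) + (n : ℚ_[p]) / (a : ℚ_[p]) := by ring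
      show ‖x‖ ≤ (p : ℝ)⁻¹
      rw [← PadicInt.padic_norm_e_of_padicInt, this]
      exact le_trans (Padic.nonarchimedean _ _) (max_le h2 hq)
  · intro hx
    refine ⟨1, one_ne_zero, by simpa using Nat.one_le_iff_ne_zero.mpr hn.ne', by simp, Or.inr ?_⟩
    have : (x : ℚ_[p]) - (n : ℚ_[p]) / ((1 : ℤ) : ℚ_[p]) = (x : ℚ_[p]) + (-(n : ℚ_[p])) := by
      push_cast; ring
    rw [this]
    refine le_trans (Padic.nonarchimedean _ _) (max_le ?_ ?_)
    · rw [PadicInt.padic_norm_e_of_padicInt]; exact hx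
    · rw [norm_neg]; exact hnn

lemma aux_W (ψ : ℕ → ℝ) (hψ : ∀ n : ℕ, ψ n = if p ∣ n then ((p : ℝ))⁻¹ else 0) :
    padicW'' p ψ = {x : ℤ_[p] | ‖x‖ ≤ (p : ℝ)⁻¹} := by
  ext x
  simp only [padicW'', Set.mem_setOf_eq]
  constructor
  · intro hinf
    by_contra hx
    -- every n in the set must be 0 or give a rational value for x
    have key : ∀ n ∈ {n : ℕ | x ∈ padicE'' p ψ n}, n ≠ 0 →
        ∃ a : ℤ, a ≠ 0 ∧ Int.gcd a n = 1 ∧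
          ((x : ℚ_[p]) = ((a : ℚ) / (n : ℚ) : ℚ) ∨ (x : ℚ_[p]) = ((n : ℚ) / (a : ℚ) : ℚ)) := by
      intro n hn hn0
      have hpn : ¬ p ∣ n := by
        intro hdvd
        rw [Set.mem_setOf_eq, aux_ball ψ n (Nat.pos_of_ne_zero hn0) hdvd
          (by rw [hψ]; simp [hdvd])] at hn
        exact hx hn
      have hψn : ψ n = 0 := by rw [hψ]; simp [hpn]
      obtain ⟨a, ha0, _, hgcd, h⟩ := hn
      refine ⟨a, ha0, hgcd, ?_⟩
      rw [hψn] at h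
      rcases h with h | h
      · left
        have := le_antisymm h (norm_nonneg _)
        rw [norm_eq_zero, sub_eq_zero] at this
        rw [this]; push_cast; ring
      · right
        have := le_antisymm h (norm_nonneg _)
        rw [norm_eq_zero, sub_eq_zero] at this
        rw [this]; push_cast; ring
    -- hence the set is finite
    by_cases hrat : ∃ q : ℚ, (x : ℚ_[p]) = (q : ℚ_[p])
    · obtain ⟨q, hq⟩ := hrat
      apply hinf
      apply Set.Finite.subset (((Set.finite_singleton (q⁻¹).den).insert q.den).insert 0)
      intro n hn
      by_cases hn0 : n = 0
      · exact Set.mem_insert_iff.mpr (Or.inl hn0)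
      obtain ⟨a, ha0, hgcd, h⟩ := key n hn hn0
      have hnpos : (0 : ℤ) < (n : ℤ) := by exact_mod_cast Nat.pos_of_ne_zero hn0
      have hcop : Nat.Coprime a.natAbs (n : ℤ).natAbs := by
        simpa [Int.gcd] using hgcd
      rcases h with h | h
      · have hq' : q = (a : ℚ) / (n : ℚ) := by
          apply (Rat.cast_injective (α := ℚ_[p])); rw [← hq, h]
        have hden := Rat.den_div_eq_of_coprime hnpos hcop
        rw [show ((n:ℤ):ℚ) = (n:ℚ) by push_cast; ring, ← hq'] at hden
        have hdn : q.den = n := by exact_mod_cast hden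
        exact Or.inr (Or.inl hdn.symm)
      · have hq' : q⁻¹ = (a : ℚ) / (n : ℚ) := by
          have : q = (n : ℚ) / (a : ℚ) := by
            apply (Rat.cast_injective (α := ℚ_[p])); rw [← hq, h]
          rw [this, inv_div]
        have hden := Rat.den_div_eq_of_coprime hnpos hcop
        rw [show ((n:ℤ):ℚ) = (n:ℚ) by push_cast; ring, ← hq'] at hden
        have hdn : q⁻¹.den = n := by exact_mod_cast hden
        exact Or.inr (Or.inr hdn.symm)
    · apply hinf
      apply Set.Finite.subset (Set.finite_singleton 0)
      intro n hn
      by_contra hn0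
      obtain ⟨a, _, _, h⟩ := key n hn (by simpa using hn0)
      rcases h with h | h <;> exact hrat ⟨_, h⟩
  · intro hx
    apply Set.infinite_of_injective_forall_mem (f := fun k : ℕ => p * (k + 1))
    · intro i j hij
      have hp0 : p ≠ 0 := hp.out.ne_zero
      simpa [hp0] using hij
    · intro k
      have hdvd : p ∣ p * (k + 1) := Dvd.intro _ rfl
      have hpos : 0 < p * (k + 1) := Nat.mul_pos hp.out.pos (Nat.succ_pos k)
      rw [Set.mem_setOf_eq, aux_ball ψ _ hpos hdvd (by rw [hψ]; simp [hdvd])]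
      exact hx

lemma aux_measure [MeasurableSpace ℤ_[p]] [BorelSpace ℤ_[p]]
    (μ : Measure ℤ_[p]) [μ.IsAddHaarMeasure] [IsProbabilityMeasure μ] :
    μ {x : ℤ_[p] | ‖x‖ ≤ (p : ℝ)⁻¹} = ((p : ℝ≥0∞))⁻¹ := by
  set B : Set ℤ_[p] := {x : ℤ_[p] | ‖x‖ ≤ (p : ℝ)⁻¹} with hB
  have hmeas : MeasurableSet B := by
    have : B = (fun x : ℤ_[p] => ‖x‖) ⁻¹' Set.Iic ((p : ℝ)⁻¹) := rfl
    rw [this]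
    exact (isClosed_Iic.preimage continuous_norm).measurableSet
  have hnorm_iff : ∀ y : ℤ_[p], ‖y‖ ≤ (p : ℝ)⁻¹ ↔ y ∈ Ideal.span {(p : ℤ_[p]) ^ 1} := by
    intro y
    have := PadicInt.norm_le_pow_iff_mem_span_pow y 1
    simpa using this
  -- cosets
  have hcover : Set.univ = ⋃ i ∈ Finset.range p, (fun x : ℤ_[p] => (-(i : ℤ_[p])) + x) ⁻¹' B := by
    ext x
    simp only [Set.mem_univ, true_iff, Set.mem_iUnion, Set.mem_preimage, Finset.mem_range]
    refine ⟨x.appr 1, by simpa using x.appr_lt 1, ?_⟩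
    have hspec := x.appr_spec 1
    have : ‖x - (x.appr 1 : ℤ_[p])‖ ≤ (p : ℝ)⁻¹ := (hnorm_iff _).mpr hspec
    show (-((x.appr 1 : ℕ) : ℤ_[p]) + x) ∈ B
    have he : -((x.appr 1 : ℕ) : ℤ_[p]) + x = x - (x.appr 1 : ℤ_[p]) := by ring
    rw [he]
    exact this
  have hCmeas : ∀ i : ℕ, MeasurableSet ((fun x : ℤ_[p] => (-(i : ℤ_[p])) + x) ⁻¹' B) := fun i =>
    hmeas.preimage (measurable_const_add _)
  have hCμ : ∀ i : ℕ, μ ((fun x : ℤ_[p] => (-(i : ℤ_[p])) + x) ⁻¹' B) = μ B := fun i =>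
    measure_preimage_add μ _ B
  have hdisj : (↑(Finset.range p) : Set ℕ).PairwiseDisjoint
      (fun i : ℕ => (fun x : ℤ_[p] => (-(i : ℤ_[p])) + x) ⁻¹' B) := by
    intro i hi j hj hij
    simp only [Finset.coe_range, Set.mem_Iio] at hi hj
    refine Set.disjoint_left.mpr ?_
    intro x hxi hxj
    exfalso; apply hij
    have h1 : x - (i : ℤ_[p]) ∈ Ideal.span {(p : ℤ_[p]) ^ 1} := by
      apply (hnorm_iff _).mp
      have he : x - (i : ℤ_[p]) = -(i : ℤ_[p]) + x := by ring
      rw [he]; exact hxi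
    have h2 : x - (j : ℤ_[p]) ∈ Ideal.span {(p : ℤ_[p]) ^ 1} := by
      apply (hnorm_iff _).mp
      have he : x - (j : ℤ_[p]) = -(j : ℤ_[p]) + x := by ring
      rw [he]; exact hxj
    have h3 : (((i : ℤ) - (j : ℤ) : ℤ) : ℤ_[p]) ∈ Ideal.span {(p : ℤ_[p]) ^ 1} := by
      have := Ideal.sub_mem _ h2 h1
      have he : x - (j : ℤ_[p]) - (x - (i : ℤ_[p])) = (((i : ℤ) - (j : ℤ) : ℤ) : ℤ_[p]) := by
        push_cast; ring
      rwa [he] at this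
    have h4 : ((p : ℤ) ^ 1) ∣ ((i : ℤ) - (j : ℤ)) := by
      rw [← PadicInt.norm_int_le_pow_iff_dvd]
      exact (PadicInt.norm_le_pow_iff_mem_span_pow _ 1).mpr h3
    have h5 : (i : ℤ) - (j : ℤ) = 0 := by
      apply Int.eq_zero_of_abs_lt_dvd (by simpa using h4)
      rw [abs_sub_lt_iff]
      constructor <;> [skip; skip] <;>
        · have : (0:ℤ) ≤ (i:ℤ) := Int.natCast_nonneg i
          have : (0:ℤ) ≤ (j:ℤ) := Int.natCast_nonneg j
          have hi' : (i:ℤ) < p := by exact_mod_cast hi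
          have hj' : (j:ℤ) < p := by exact_mod_cast hj
          omega
    omega
  have hp0 : (p : ℝ≥0∞) ≠ 0 := by exact_mod_cast hp.out.ne_zero
  have hpt : (p : ℝ≥0∞) ≠ ⊤ := ENNReal.natCast_ne_top p
  have hmul : (p : ℝ≥0∞) * μ B = 1 := by
    have h1 : (1 : ℝ≥0∞) = μ (⋃ i ∈ Finset.range p, (fun x : ℤ_[p] => (-(i : ℤ_[p])) + x) ⁻¹' B) := by
      rw [← hcover]; exact (measure_univ).symm
    rw [measure_biUnion_finset hdisj (fun i _ => hCmeas i)] at h1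
    have h2 : ∑ i ∈ Finset.range p, μ ((fun x : ℤ_[p] => (-(i : ℤ_[p])) + x) ⁻¹' B)
        = (p : ℝ≥0∞) * μ B := by
      rw [Finset.sum_congr rfl (fun i _ => hCμ i), Finset.sum_const, Finset.card_range,
        nsmul_eq_mul]
    rw [h2] at h1
    exact h1.symm
  calc μ B = (p : ℝ≥0∞)⁻¹ * ((p : ℝ≥0∞) * μ B) := by
        rw [← mul_assoc, ENNReal.inv_mul_cancel hp0 hpt, one_mul]
    _ = (p : ℝ≥0∞)⁻¹ := by rw [hmul, mul_one]

/-- **Failure of the zero-one law for the sets `E_n''` (Haynes).** Let `p` be a prime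
and `ψ(n) = 1/p` if `p ∣ n`, `ψ(n) = 0` otherwise.  Then for every `n ≥ 1` with
`p ∣ n` one has `E_n''(ψ) = {x ∈ ℤ_p : |x|_p ≤ 1/p}`, hence `μ_p(W_p''(ψ)) = 1/p`;
in particular this measure is neither `0` nor `1`. -/
theorem stmt17 (p : ℕ) [Fact p.Prime] [MeasurableSpace ℤ_[p]] [BorelSpace ℤ_[p]]
    (μ : Measure ℤ_[p]) [μ.IsAddHaarMeasure] [IsProbabilityMeasure μ]
    (ψ : ℕ → ℝ) (hψ : ∀ n : ℕ, ψ n = if p ∣ n then ((p : ℝ))⁻¹ else 0) :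
    (∀ n : ℕ, 0 < n → p ∣ n →
        padicE'' p ψ n = {x : ℤ_[p] | ‖x‖ ≤ ((p : ℝ))⁻¹}) ∧
      μ (padicW'' p ψ) = ((p : ℝ≥0∞))⁻¹ ∧
      μ (padicW'' p ψ) ≠ 0 ∧ μ (padicW'' p ψ) ≠ 1 := by
  have hE : ∀ n : ℕ, 0 < n → p ∣ n →
      padicE'' p ψ n = {x : ℤ_[p] | ‖x‖ ≤ ((p : ℝ))⁻¹} :=
    fun n hn hpn => aux_ball ψ n hn hpn (by rw [hψ n]; simp [hpn])
  have hW : μ (padicW'' p ψ) = ((p : ℝ≥0∞))⁻¹ := by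
    rw [aux_W ψ hψ, aux_measure μ]
  refine ⟨hE, hW, ?_, ?_⟩
  · rw [hW]
    exact ENNReal.inv_ne_zero.mpr (ENNReal.natCast_ne_top p)
  · rw [hW]
    have h1 : (1 : ℝ≥0∞) < (p : ℝ≥0∞) := by exact_mod_cast ‹Fact p.Prime›.out.one_lt
    exact ne_of_lt (ENNReal.inv_lt_one.mpr h1)
end
end

section
/- Let ℓ ≥ 0 and k ≥ 1 be integers and p_1, …, p_k (not necessarily distinct) primes, and equip X = (ℝ/ℤ)^ℓ × ℤ_{p_1} × ⋯ × ℤ_{p_k} with the sup metric. Then the (ℓ+k)-dimensional Hausdorff measure H^{ℓ+k} on X is a constant multiple of the product measure μ; that is, there is a constant c ∈ [0,∞) such that H^{ℓ+k}(F) = c·μ(F) for every Borel set F ⊆ X. Moreover H^{ℓ+k}(F) ≤ p_1⋯p_k · μ(F) for every Borel set F ⊆ X. -/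
open MeasureTheory Filter
open scoped ENNReal

noncomputable section

/-- The set `E_n^{ℓ,p_1,…,p_k}(ψ) ⊆ (ℝ/ℤ)^ℓ × ℤ_{p_1} × ⋯ × ℤ_{p_k}`: points all of
whose coordinates admit a rational approximation `a/n` with `|a| ≤ n`, `gcd(a,n) = 1`
within distance `ψ(n)` (quotient distance on the circle coordinates, `p_i`-adic
distance on the `p_i`-adic coordinates). -/
def prodE (ℓ k : ℕ) (P : Fin k → ℕ) [∀ i, Fact (P i).Prime] (ψ : ℕ → ℝ) (n : ℕ) :
    Set ((Fin ℓ → UnitAddCircle) × ((i : Fin k) → ℤ_[P i])) :=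
  {x | (∀ i : Fin ℓ, ∃ a : ℤ, |a| ≤ (n : ℤ) ∧ Int.gcd a n = 1 ∧
          ‖x.1 i - (((a : ℝ) / (n : ℝ) : ℝ) : UnitAddCircle)‖ ≤ ψ n) ∧
       (∀ i : Fin k, ∃ a : ℤ, |a| ≤ (n : ℤ) ∧ Int.gcd a n = 1 ∧
          ‖(x.2 i : ℚ_[P i]) - (a : ℚ_[P i]) / (n : ℚ_[P i])‖ ≤ ψ n)}

/-- `W_{ℓ,p_1,…,p_k}(ψ)`: points lying in infinitely many of the sets
`E_n^{ℓ,p_1,…,p_k}(ψ)`. -/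
def prodW (ℓ k : ℕ) (P : Fin k → ℕ) [∀ i, Fact (P i).Prime] (ψ : ℕ → ℝ) :
    Set ((Fin ℓ → UnitAddCircle) × ((i : Fin k) → ℤ_[P i])) :=
  {x | {n : ℕ | x ∈ prodE ℓ k P ψ n}.Infinite}

/-- The product measure on `(ℝ/ℤ)^ℓ × ℤ_{p_1} × ⋯ × ℤ_{p_k}` built from Lebesgue
measure on the circle factors and given measures on the `p_i`-adic factors. -/
def prodMeasure (ℓ k : ℕ) (P : Fin k → ℕ) [∀ i, Fact (P i).Prime]
    [∀ i, MeasurableSpace ℤ_[P i]] (μs : (i : Fin k) → Measure ℤ_[P i]) :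
    Measure ((Fin ℓ → UnitAddCircle) × ((i : Fin k) → ℤ_[P i])) :=
  (Measure.pi fun _ : Fin ℓ => (volume : Measure UnitAddCircle)).prod (Measure.pi μs)


section AuxCover
open Set

lemma circle_dist_le (r s : ℝ) :
    dist ((r : UnitAddCircle)) ((s : UnitAddCircle)) ≤ |r - s| := by
  rw [dist_eq_norm]
  have h : (r : UnitAddCircle) - (s : UnitAddCircle) = ((r - s : ℝ) : UnitAddCircle) :=
    by norm_cast
  rw [h, UnitAddCircle.norm_eq]
  simpa using round_le (r - s) 0

lemma padic_two_dist {p : ℕ} [hp : Fact p.Prime] {m : ℕ} {c x y : ℤ_[p]}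
    (hx : ‖x - c‖ ≤ (p : ℝ) ^ (-(m : ℤ))) (hy : ‖y - c‖ ≤ (p : ℝ) ^ (-(m : ℤ))) :
    dist x y ≤ (p : ℝ) ^ (-(m : ℤ)) := by
  rw [dist_eq_norm]
  have h : x - y = (x - c) + (c - y) := by ring
  rw [h]
  refine (PadicInt.nonarchimedean _ _).trans (max_le hx ?_)
  rwa [norm_sub_rev]

example (p : ℕ) [hp : Fact p.Prime] (N : ℕ) (hN : 1 ≤ N) :
    ((p : ℝ) ^ (-(Nat.log p N + 1 : ℕ) : ℤ)) ≤ (N : ℝ)⁻¹ := by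
  have h1 : (N : ℝ) ≤ (p : ℝ) ^ (Nat.log p N + 1) := by
    exact_mod_cast (Nat.lt_pow_succ_log_self hp.out.one_lt N).le
  rw [zpow_neg, zpow_natCast]
  exact inv_anti₀ (by exact_mod_cast hN) h1

lemma cover_bound (ℓ k : ℕ) (P : Fin k → ℕ) [∀ i, Fact (P i).Prime]
    [∀ i, MeasurableSpace ℤ_[P i]] [∀ i, BorelSpace ℤ_[P i]]
    [BorelSpace ((Fin ℓ → UnitAddCircle) × ((i : Fin k) → ℤ_[P i]))] :
    μH[((ℓ + k : ℕ) : ℝ)] (univ : Set ((Fin ℓ → UnitAddCircle) × ((i : Fin k) → ℤ_[P i])))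
      ≤ ∏ i : Fin k, (P i : ℝ≥0∞) := by
  haveI : Fact ((0:ℝ) < 1) := ⟨zero_lt_one⟩
  set d : ℝ := ((ℓ + k : ℕ) : ℝ) with hd_def
  have hd : 0 ≤ d := by positivity
  -- exponent for the p-adic balls at scale N
  set m : ℕ → Fin k → ℕ := fun N i => Nat.log (P i) N + 1 with hm_def
  -- the cover
  set t : ∀ N : ℕ, (Fin ℓ → Fin N) × ((i : Fin k) → Fin ((P i) ^ (m N i))) →
      Set ((Fin ℓ → UnitAddCircle) × ((i : Fin k) → ℤ_[P i])) := fun N j =>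
    (univ.pi fun i => (fun r : ℝ => (r : UnitAddCircle)) ''
        Icc ((j.1 i : ℝ) / N) (((j.1 i : ℝ) + 1) / N)) ×ˢ
    (univ.pi fun i => {x : ℤ_[P i] | ‖x - ((j.2 i : ℕ) : ℤ_[P i])‖ ≤ (P i : ℝ) ^ (-(m N i : ℤ))})
    with ht_def
  -- diameter bound
  have hdiam : ∀ N : ℕ, 1 ≤ N → ∀ j, EMetric.diam (t N j) ≤ (N : ℝ≥0∞)⁻¹ := by
    intro N hN j
    have hN0 : (0:ℝ) < N := by exact_mod_cast hN
    have hofReal : ENNReal.ofReal ((N:ℝ)⁻¹) = (N : ℝ≥0∞)⁻¹ := by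
      rw [ENNReal.ofReal_inv_of_pos hN0, ENNReal.ofReal_natCast]
    apply EMetric.diam_le
    rintro ⟨u1, u2⟩ ⟨hu1, hu2⟩ ⟨v1, v2⟩ ⟨hv1, hv2⟩
    rw [Prod.edist_eq]
    apply max_le
    · rw [edist_pi_def]
      apply Finset.sup_le
      intro i _
      rw [edist_dist, ← hofReal]
      apply ENNReal.ofReal_le_ofReal
      obtain ⟨r, hr, hru⟩ := hu1 i (mem_univ i)
      obtain ⟨s, hs, hsv⟩ := hv1 i (mem_univ i)
      rw [← hru, ← hsv]
      refine (circle_dist_le r s).trans ?_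
      have : ((j.1 i : ℝ) + 1) / N - (j.1 i : ℝ) / N = (N:ℝ)⁻¹ := by
        field_simp
        ring
      rw [abs_sub_le_iff]
      constructor
      · linarith [hr.1, hr.2, hs.1, hs.2, this]
      · linarith [hr.1, hr.2, hs.1, hs.2, this]
    · rw [edist_pi_def]
      apply Finset.sup_le
      intro i _
      rw [edist_dist, ← hofReal]
      apply ENNReal.ofReal_le_ofReal
      refine (padic_two_dist (hu2 i (mem_univ i)) (hv2 i (mem_univ i))).trans ?_
      have h1 : (N : ℝ) ≤ (P i : ℝ) ^ (m N i) := by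
        exact_mod_cast (Nat.lt_pow_succ_log_self (Fact.out : (P i).Prime).one_lt N).le
      rw [zpow_neg, zpow_natCast]
      exact inv_anti₀ hN0 h1
  -- covering property
  have hcov : ∀ N : ℕ, 1 ≤ N →
      (univ : Set ((Fin ℓ → UnitAddCircle) × ((i : Fin k) → ℤ_[P i]))) ⊆ ⋃ j, t N j := by
    intro N hN x _
    have hN0 : (0:ℝ) < N := by exact_mod_cast hN
    rw [mem_iUnion]
    -- circle indices
    have hy : ∀ i : Fin ℓ, ∃ y : ℝ, y ∈ Ico (0:ℝ) 1 ∧ (y : UnitAddCircle) = x.1 i := by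
      intro i
      refine ⟨(AddCircle.equivIco 1 0 (x.1 i) : ℝ), ?_, ?_⟩
      · have := (AddCircle.equivIco 1 0 (x.1 i)).2
        simpa using this
      · exact (AddCircle.equivIco 1 0).symm_apply_apply (x.1 i)
    choose y hy1 hy2 using hy
    have hfl : ∀ i : Fin ℓ, ⌊y i * N⌋₊ < N := by
      intro i
      rw [Nat.floor_lt (mul_nonneg (hy1 i).1 hN0.le)]
      calc y i * N < 1 * N := by
            exact mul_lt_mul_of_pos_right (hy1 i).2 hN0
      _ = (N:ℝ) := one_mul _
    refine ⟨⟨fun i => ⟨⌊y i * N⌋₊, hfl i⟩, fun i => ⟨(x.2 i).appr (m N i), PadicInt.appr_lt _ _⟩⟩, ?_, ?_⟩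
    · intro i _
      refine ⟨y i, ⟨?_, ?_⟩, hy2 i⟩
      · rw [div_le_iff₀ hN0]
        exact Nat.floor_le (mul_nonneg (hy1 i).1 hN0.le)
      · rw [le_div_iff₀ hN0]
        push_cast
        exact (Nat.lt_floor_add_one (y i * N)).le
    · intro i _
      exact (PadicInt.norm_le_pow_iff_mem_span_pow _ _).mpr (PadicInt.appr_spec _ _)
  -- sum bound
  have hsum : ∀ N : ℕ, 1 ≤ N →
      (∑ j : (Fin ℓ → Fin N) × ((i : Fin k) → Fin ((P i) ^ (m N i))),
        EMetric.diam (t N j) ^ d) ≤ ∏ i : Fin k, (P i : ℝ≥0∞) := by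
    intro N hN
    have hNne : (N : ℝ≥0∞) ≠ 0 := by exact_mod_cast Nat.one_le_iff_ne_zero.mp hN
    have card_le : Fintype.card ((Fin ℓ → Fin N) × ((i : Fin k) → Fin ((P i) ^ (m N i))))
        ≤ (∏ i : Fin k, P i) * N ^ (ℓ + k) := by
      rw [Fintype.card_prod, Fintype.card_pi, Fintype.card_pi]
      simp only [Fintype.card_fin, Finset.prod_const, Finset.card_univ, Fintype.card_fin]
      calc N ^ ℓ * ∏ i : Fin k, (P i) ^ (m N i)
          ≤ N ^ ℓ * ∏ i : Fin k, (P i * N) := by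
            gcongr with i _
            calc (P i) ^ (m N i) = (P i) ^ (Nat.log (P i) N) * P i := pow_succ _ _
            _ ≤ N * P i := Nat.mul_le_mul_right _
                (Nat.pow_log_le_self (P i) (Nat.one_le_iff_ne_zero.mp hN))
            _ = P i * N := Nat.mul_comm _ _
      _ = (∏ i : Fin k, P i) * N ^ (ℓ + k) := by
            rw [Finset.prod_mul_distrib, Finset.prod_const, Finset.card_univ, Fintype.card_fin,
              pow_add]
            ring
    calc (∑ j : (Fin ℓ → Fin N) × ((i : Fin k) → Fin ((P i) ^ (m N i))),
            EMetric.diam (t N j) ^ d)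
        ≤ ∑ _j : (Fin ℓ → Fin N) × ((i : Fin k) → Fin ((P i) ^ (m N i))),
            ((N : ℝ≥0∞)⁻¹) ^ d :=
          Finset.sum_le_sum fun j _ => ENNReal.rpow_le_rpow (hdiam N hN j) hd
    _ = (Fintype.card ((Fin ℓ → Fin N) × ((i : Fin k) → Fin ((P i) ^ (m N i)))) : ℝ≥0∞)
          * ((N : ℝ≥0∞)⁻¹) ^ d := by
          rw [Finset.sum_const, Finset.card_univ, nsmul_eq_mul]
    _ ≤ (((∏ i : Fin k, P i) * N ^ (ℓ + k) : ℕ) : ℝ≥0∞) * ((N : ℝ≥0∞)⁻¹) ^ d := by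
          gcongr
    _ = ∏ i : Fin k, (P i : ℝ≥0∞) := by
          rw [hd_def, ENNReal.rpow_natCast, ← ENNReal.inv_pow]
          push_cast
          rw [mul_assoc, ENNReal.mul_inv_cancel (pow_ne_zero _ hNne)
            (ENNReal.pow_ne_top (ENNReal.natCast_ne_top N)), mul_one]
  -- conclude
  have H := Measure.hausdorffMeasure_le_liminf_sum d
    (univ : Set ((Fin ℓ → UnitAddCircle) × ((i : Fin k) → ℤ_[P i])))
    (fun N : ℕ => (N : ℝ≥0∞)⁻¹) ENNReal.tendsto_inv_nat_nhds_zero t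
    (by filter_upwards [eventually_ge_atTop 1] with N hN; exact hdiam N hN)
    (by filter_upwards [eventually_ge_atTop 1] with N hN; exact hcov N hN)
  refine H.trans ?_
  have : liminf (fun N : ℕ => ∑ j : (Fin ℓ → Fin N) × ((i : Fin k) → Fin ((P i) ^ (m N i))),
      EMetric.diam (t N j) ^ d) atTop ≤ liminf (fun _ : ℕ => ∏ i : Fin k, (P i : ℝ≥0∞)) atTop := by
    refine liminf_le_liminf ?_ ?_ ?_
    · filter_upwards [eventually_ge_atTop 1] with N hN
      exact hsum N hN
    · isBoundedDefault
    · isBoundedDefault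
  rw [liminf_const] at this
  exact this

end AuxCover

/-- **Lemma 7 (Haynes).** Let `ℓ ≥ 0`, `k ≥ 1` and `p_1, …, p_k` primes, and equip
`X = (ℝ/ℤ)^ℓ × ℤ_{p_1} × ⋯ × ℤ_{p_k}` with the sup metric.  Then the
`(ℓ+k)`-dimensional Hausdorff measure on `X` is a (finite) constant multiple of the
product Haar measure `μ`, and moreover `H^(ℓ+k)(F) ≤ p_1⋯p_k · μ(F)` for all Borel
sets `F`. -/
theorem stmt18 (ℓ k : ℕ) (hk : 1 ≤ k)
    (P : Fin k → ℕ) [∀ i, Fact (P i).Prime]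
    [∀ i, MeasurableSpace ℤ_[P i]] [∀ i, BorelSpace ℤ_[P i]]
    [BorelSpace ((Fin ℓ → UnitAddCircle) × ((i : Fin k) → ℤ_[P i]))]
    (μs : (i : Fin k) → Measure ℤ_[P i])
    [∀ i, (μs i).IsAddHaarMeasure] [∀ i, IsProbabilityMeasure (μs i)] :
    (∃ c : ℝ≥0∞, c ≠ ⊤ ∧
        ∀ F : Set ((Fin ℓ → UnitAddCircle) × ((i : Fin k) → ℤ_[P i])),
          MeasurableSet F → μH[((ℓ + k : ℕ) : ℝ)] F = c * prodMeasure ℓ k P μs F) ∧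
      ∀ F : Set ((Fin ℓ → UnitAddCircle) × ((i : Fin k) → ℤ_[P i])),
        MeasurableSet F →
          μH[((ℓ + k : ℕ) : ℝ)] F ≤ (∏ i : Fin k, (P i : ℝ≥0∞)) * prodMeasure ℓ k P μs F := by
  haveI : (prodMeasure ℓ k P μs).IsAddHaarMeasure :=
    Measure.prod.instIsAddHaarMeasure _ _
  haveI : IsProbabilityMeasure (volume : Measure UnitAddCircle) :=
    ⟨UnitAddCircle.measure_univ⟩
  haveI hprob : IsProbabilityMeasure
      ((Measure.pi fun _ : Fin ℓ => (volume : Measure UnitAddCircle)).prod (Measure.pi μs)) :=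
    inferInstance
  haveI : IsProbabilityMeasure (prodMeasure ℓ k P μs) := hprob
  have hbound := cover_bound ℓ k P
  haveI : IsFiniteMeasure
      (μH[((ℓ + k : ℕ) : ℝ)] :
        Measure ((Fin ℓ → UnitAddCircle) × ((i : Fin k) → ℤ_[P i]))) := by
    constructor
    refine hbound.trans_lt ?_
    exact ENNReal.prod_lt_top (fun i _ => (ENNReal.natCast_ne_top _).lt_top)
  set c := Measure.addHaarScalarFactor
    (μH[((ℓ + k : ℕ) : ℝ)] :
      Measure ((Fin ℓ → UnitAddCircle) × ((i : Fin k) → ℤ_[P i])))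
    (prodMeasure ℓ k P μs) with hc_def
  have key : (μH[((ℓ + k : ℕ) : ℝ)] :
      Measure ((Fin ℓ → UnitAddCircle) × ((i : Fin k) → ℤ_[P i])))
      = c • prodMeasure ℓ k P μs :=
    Measure.isAddLeftInvariant_eq_smul _ _
  have happ : ∀ F : Set ((Fin ℓ → UnitAddCircle) × ((i : Fin k) → ℤ_[P i])),
      μH[((ℓ + k : ℕ) : ℝ)] F = (c : ℝ≥0∞) * prodMeasure ℓ k P μs F := by
    intro F
    conv_lhs => rw [key]
    rw [Measure.smul_apply, ENNReal.smul_def, smul_eq_mul]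
  have hc : (c : ℝ≥0∞) = μH[((ℓ + k : ℕ) : ℝ)]
      (Set.univ : Set ((Fin ℓ → UnitAddCircle) × ((i : Fin k) → ℤ_[P i]))) := by
    rw [happ Set.univ, measure_univ, mul_one]
  refine ⟨⟨(c : ℝ≥0∞), ENNReal.coe_ne_top, fun F _ => happ F⟩, ?_⟩
  intro F _
  rw [happ F]
  exact mul_le_mul_left (by rw [hc]; exact hbound) _
end
end
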